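/- arXiv:1910.07985 — 9 statements merged into one kernel-verified Lean document; each statement's English description precedes it below -/
import Mathlib

section
/- Let φ be an automorphism of an atomless probability measure algebra A with nontrivial support (i.e., it is not the identity almost everywhere). Then there exists a nonzero element b of A such that φ(b) ∧ b = 0. -/
open scoped symmDiff

/-- Let `φ` be an automorphism of an atomless probability measure algebra
`A` with nontrivial support (i.e. it is not the identity). Then there exists a nonzero
`b ∈ A` with `φ b ⊓ b = ⊥`. A measure algebra is a Boolean algebra with a finitely
additive probability `μ` such that `d(a,b) = μ (a ∆ b)` is a complete metric. -/
theorem stmt0 {A : Type*} [BooleanAlgebra A] [MetricSpace A] [CompleteSpace A]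
    (μ : A → ℝ) (hμ1 : μ ⊤ = 1) (hμ0 : ∀ a : A, 0 ≤ μ a)
    (hadd : ∀ a b : A, a ⊓ b = ⊥ → μ (a ⊔ b) = μ a + μ b)
    (hdist : ∀ a b : A, dist a b = μ (a ∆ b))
    (hatomless : ∀ a : A, ¬ IsAtom a)
    (φ : A ≃o A) (hpres : ∀ a : A, μ (φ a) = μ a)
    (hsupp : ∃ a : A, φ a ≠ a) :
    ∃ b : A, b ≠ ⊥ ∧ φ b ⊓ b = ⊥ := by
  -- μ is zero only at ⊥
  have hzero : ∀ x : A, μ x = 0 → x = ⊥ := by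
    intro x hx
    have : dist x ⊥ = 0 := by rw [hdist, symmDiff_bot, hx]
    exact dist_eq_zero.mp this
  obtain ⟨a, ha⟩ := hsupp
  refine ⟨a \ φ a, ?_, ?_⟩
  · intro hb
    -- then a ≤ φ a
    have hle : a ≤ φ a := sdiff_eq_bot_iff.mp hb
    have hdisj : a ⊓ (φ a \ a) = ⊥ := by
      simpa [inf_comm] using (disjoint_sdiff_self_left (a := φ a) (b := a)).eq_bot
    have hsup : a ⊔ (φ a \ a) = φ a := sup_sdiff_cancel' le_rfl hle
    have key := hadd _ _ hdisj
    rw [hsup] at key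
    rw [hpres] at key
    have h0 : μ (φ a \ a) = 0 := by linarith [key]
    have : φ a \ a = ⊥ := hzero _ h0
    exact ha (le_antisymm (sdiff_eq_bot_iff.mp this) hle)
  · have h1 : φ (a \ φ a) ≤ φ a := φ.monotone sdiff_le
    have h2 : (a \ φ a) ⊓ φ a = ⊥ := by
      simpa [inf_comm] using (disjoint_sdiff_self_right (a := φ a) (b := a)).eq_bot
    refine le_bot_iff.mp ?_
    calc φ (a \ φ a) ⊓ (a \ φ a) ≤ φ a ⊓ (a \ φ a) := inf_le_inf_right _ h1
      _ ≤ ⊥ := by rw [inf_comm, h2]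
end

section
/- Let φ be a measure-preserving automorphism of an atomless probability measure algebra A. Then there exists a₀ ∈ A with a₀ ∧ φ(a₀) = 0 such that supp φ = φ⁻¹(a₀) ∨ a₀ ∨ φ(a₀). -/
open scoped symmDiff

/-- Let `φ` be a measure-preserving automorphism of a (separable) atomless
probability measure algebra `A`. Then there is `a₀ ∈ A` with `a₀ ⊓ φ a₀ = ⊥` such that
`supp φ = φ⁻¹ a₀ ⊔ a₀ ⊔ φ a₀`, where `supp φ` is the infimum of the set
`{a : ∀ b ≤ ¬ a, φ b = b}` (expressed here via `IsGLB`). -/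
theorem stmt1 {A : Type*} [BooleanAlgebra A] [MetricSpace A] [CompleteSpace A]
    [TopologicalSpace.SeparableSpace A]
    (μ : A → ℝ) (hμ1 : μ ⊤ = 1) (hμ0 : ∀ a : A, 0 ≤ μ a)
    (hadd : ∀ a b : A, a ⊓ b = ⊥ → μ (a ⊔ b) = μ a + μ b)
    (hdist : ∀ a b : A, dist a b = μ (a ∆ b))
    (hatomless : ∀ a : A, ¬ IsAtom a)
    (φ : A ≃o A) (hpres : ∀ a : A, μ (φ a) = μ a) :
    ∃ a₀ : A, a₀ ⊓ φ a₀ = ⊥ ∧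
      IsGLB {a : A | ∀ b ≤ aᶜ, φ b = b} (φ.symm a₀ ⊔ a₀ ⊔ φ a₀) := by
  classical
  -- basic measure facts
  have hmono : ∀ a b : A, a ≤ b → μ a ≤ μ b := by
    intro a b hab
    have h := hadd a (b \ a) (by simp)
    rw [sup_sdiff_cancel_right hab] at h
    have := hμ0 (b \ a)
    linarith
  have hμle1 : ∀ a : A, μ a ≤ 1 := fun a => hμ1 ▸ hmono a ⊤ le_top
  have hzero : ∀ a : A, μ a = 0 → a = ⊥ := by
    intro a ha
    have : dist a ⊥ = 0 := by rw [hdist, symmDiff_bot, ha]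
    exact dist_eq_zero.mp this
  have hantisymm : ∀ a b : A, a ≤ b → μ b ≤ μ a → a = b := by
    intro a b hab hba
    have h := hadd a (b \ a) (by simp)
    rw [sup_sdiff_cancel_right hab] at h
    have h0 : μ (b \ a) = 0 := le_antisymm (by linarith) (hμ0 _)
    have : b \ a = ⊥ := hzero _ h0
    exact le_antisymm hab (by rwa [sdiff_eq_bot_iff] at this)
  have hsubadd : ∀ a b : A, μ (a ⊔ b) ≤ μ a + μ b := by
    intro a b
    have h := hadd a (b \ a) (by simp)
    rw [sup_sdiff_self_right] at h
    have := hmono (b \ a) b sdiff_le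
    linarith
  -- μ is 1-Lipschitz
  have hμlip : ∀ a b : A, |μ a - μ b| ≤ dist a b := by
    intro a b
    rw [hdist]
    have h1 : a ≤ b ⊔ a ∆ b := by
      have : a \ b ≤ a ∆ b := le_sup_left
      calc a = a ⊓ b ⊔ a \ b := (sup_inf_sdiff a b).symm
        _ ≤ b ⊔ a ∆ b := sup_le_sup inf_le_right this
    have h2 : b ≤ a ⊔ a ∆ b := by
      have : b \ a ≤ a ∆ b := le_sup_right
      calc b = b ⊓ a ⊔ b \ a := (sup_inf_sdiff b a).symm
        _ ≤ a ⊔ a ∆ b := sup_le_sup inf_le_right this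
    have k1 : μ a ≤ μ b + μ (a ∆ b) :=
      (hmono _ _ h1).trans (hsubadd _ _)
    have k2 : μ b ≤ μ a + μ (a ∆ b) :=
      (hmono _ _ h2).trans (hsubadd _ _)
    rw [abs_le]; constructor <;> linarith
  -- φ facts
  have hφsymm : ∀ a : A, μ (φ.symm a) = μ a := by
    intro a; conv_rhs => rw [← φ.apply_symm_apply a, hpres]
  have hφiso : ∀ a b : A, dist (φ a) (φ b) = dist a b := by
    intro a b; rw [hdist, hdist, ← map_symmDiff', hpres]
  -- helper: le compl gives disjoint
  have hc : ∀ x y : A, x ≤ yᶜ → x ⊓ y = ⊥ := by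
    intro x y h
    refine le_bot_iff.mp ?_
    calc x ⊓ y ≤ yᶜ ⊓ y := inf_le_inf_right _ h
      _ = ⊥ := by simp
  have hle_of : ∀ x y : A, x ⊓ yᶜ = ⊥ → x ≤ y := by
    intro x y h
    rw [← sdiff_eq] at h
    exact sdiff_eq_bot_iff.mp h
  -- the set D and the sup function s
  set D : Set A := {a : A | a ⊓ φ a = ⊥} with hD
  have hbotD : (⊥ : A) ∈ D := by simp [hD]
  set s : A → ℝ := fun a => sSup (μ '' {b | b ∈ D ∧ a ≤ b}) with hs
  have hsne : ∀ a ∈ D, (μ '' {b | b ∈ D ∧ a ≤ b}).Nonempty :=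
    fun a ha => ⟨μ a, a, ⟨ha, le_rfl⟩, rfl⟩
  have hsbdd : ∀ a : A, BddAbove (μ '' {b | b ∈ D ∧ a ≤ b}) :=
    fun a => ⟨1, by rintro x ⟨b, _, rfl⟩; exact hμle1 b⟩
  have hstep : ∀ (a : {x // x ∈ D}) (n : ℕ),
      ∃ b : {x // x ∈ D}, a.1 ≤ b.1 ∧ s a.1 - (1/2)^n < μ b.1 := by
    intro a n
    have hlt : s a.1 - (1/2)^n < s a.1 := by
      have : (0:ℝ) < (1/2)^n := by positivity
      linarith
    obtain ⟨x, ⟨b, ⟨hbD, hab⟩, rfl⟩, hx⟩ := exists_lt_of_lt_csSup (hsne a.1 a.2) hlt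
    exact ⟨⟨b, hbD⟩, hab, hx⟩
  set f : ℕ → {x // x ∈ D} :=
    fun n => Nat.rec ⟨⊥, hbotD⟩ (fun n a => (hstep a n).choose) n with hf
  have hfsucc : ∀ n, f (n+1) = (hstep (f n) n).choose := fun n => rfl
  have hmonof : ∀ n, (f n).1 ≤ (f (n+1)).1 := fun n => by
    rw [hfsucc]; exact (hstep (f n) n).choose_spec.1
  have hflb : ∀ n, s (f n).1 - (1/2)^n < μ (f (n+1)).1 := fun n => by
    rw [hfsucc]; exact (hstep (f n) n).choose_spec.2
  have hmono' : Monotone (fun n => (f n).1) := monotone_nat_of_le_succ hmonof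
  have hdistf : ∀ n m, dist ((f n).1) ((f m).1) = dist (μ (f n).1) (μ (f m).1) := by
    have key : ∀ n m, n ≤ m → dist ((f n).1) ((f m).1) = dist (μ (f n).1) (μ (f m).1) := by
      intro n m hnm
      have hle := hmono' hnm
      have h := hadd ((f n).1) ((f m).1 \ (f n).1) (by simp)
      rw [sup_sdiff_cancel_right hle] at h
      have h0 := hμ0 ((f m).1 \ (f n).1)
      rw [hdist, symmDiff_of_le hle, Real.dist_eq, abs_sub_comm,
        abs_of_nonneg (by linarith : (0:ℝ) ≤ μ (f m).1 - μ (f n).1)]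
      linarith
    intro n m
    rcases le_total n m with h | h
    · exact key n m h
    · rw [dist_comm, dist_comm (μ (f n).1), key m n h]
  have hμf_cauchy : CauchySeq (fun n => μ (f n).1) := by
    refine Filter.Tendsto.cauchySeq (tendsto_atTop_ciSup
      (fun n m h => hmono _ _ (hmono' h)) ⟨1, ?_⟩)
    rintro x ⟨n, rfl⟩; exact hμle1 _
  have hfc : CauchySeq (fun n => (f n).1) := by
    rw [Metric.cauchySeq_iff]
    rw [Metric.cauchySeq_iff] at hμf_cauchy
    intro ε hε
    obtain ⟨N, hN⟩ := hμf_cauchy ε hε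
    exact ⟨N, fun m hm n hn => by rw [hdistf]; exact hN m hm n hn⟩
  obtain ⟨a₀, ha₀⟩ := cauchySeq_tendsto_of_complete hfc
  -- Lipschitz facts
  have hinf2 : ∀ x y u v : A, dist (x ⊓ u) (y ⊓ v) ≤ dist x y + dist u v := by
    have one : ∀ x y u : A, dist (x ⊓ u) (y ⊓ u) ≤ dist x y := by
      intro x y u
      rw [hdist, hdist]
      apply hmono
      rw [inf_comm x u, inf_comm y u, ← inf_symmDiff_distrib_left]
      exact inf_le_right
    intro x y u v
    calc dist (x ⊓ u) (y ⊓ v) ≤ dist (x ⊓ u) (y ⊓ u) + dist (y ⊓ u) (y ⊓ v) :=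
          dist_triangle _ _ _
      _ ≤ dist x y + dist u v := by
          refine add_le_add (one x y u) ?_
          rw [inf_comm y u, inf_comm y v]
          exact one u v y
  -- f n ≤ a₀
  have hlefa : ∀ n, (f n).1 ≤ a₀ := by
    intro n
    have hcont : Filter.Tendsto (fun m => (f n).1 ⊓ (f m).1) Filter.atTop
        (nhds ((f n).1 ⊓ a₀)) := by
      rw [Metric.tendsto_atTop]
      rw [Metric.tendsto_atTop] at ha₀
      intro ε hε
      obtain ⟨N, hN⟩ := ha₀ ε hε
      refine ⟨N, fun m hm => ?_⟩
      calc dist ((f n).1 ⊓ (f m).1) ((f n).1 ⊓ a₀)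
          ≤ dist ((f n).1) ((f n).1) + dist ((f m).1) a₀ := hinf2 _ _ _ _
        _ < ε := by simpa using hN m hm
    have hconst : Filter.Tendsto (fun m => (f n).1 ⊓ (f m).1) Filter.atTop
        (nhds ((f n).1)) := by
      refine Filter.Tendsto.congr' ?_ tendsto_const_nhds
      filter_upwards [Filter.eventually_ge_atTop n] with m hm
      exact (inf_eq_left.mpr (hmono' hm)).symm
    have := tendsto_nhds_unique hconst hcont
    exact inf_eq_left.mp this.symm
  -- a₀ ∈ D
  have ha₀D : a₀ ⊓ φ a₀ = ⊥ := by
    have hcont : Filter.Tendsto (fun m => (f m).1 ⊓ φ (f m).1) Filter.atTop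
        (nhds (a₀ ⊓ φ a₀)) := by
      rw [Metric.tendsto_atTop]
      rw [Metric.tendsto_atTop] at ha₀
      intro ε hε
      obtain ⟨N, hN⟩ := ha₀ (ε/2) (by linarith)
      refine ⟨N, fun m hm => ?_⟩
      calc dist ((f m).1 ⊓ φ (f m).1) (a₀ ⊓ φ a₀)
          ≤ dist ((f m).1) a₀ + dist (φ (f m).1) (φ a₀) := hinf2 _ _ _ _
        _ = dist ((f m).1) a₀ + dist ((f m).1) a₀ := by rw [hφiso]
        _ < ε := by have := hN m hm; linarith
    have hconst : Filter.Tendsto (fun m => (f m).1 ⊓ φ (f m).1) Filter.atTop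
        (nhds (⊥ : A)) := by
      refine Filter.Tendsto.congr' ?_ tendsto_const_nhds
      filter_upwards with m
      exact ((f m).2 : (f m).1 ⊓ φ (f m).1 = ⊥).symm
    exact (tendsto_nhds_unique hcont hconst)
  -- μ along the sequence converges to μ a₀
  have hμtend : Filter.Tendsto (fun n => μ (f n).1) Filter.atTop (nhds (μ a₀)) := by
    rw [Metric.tendsto_atTop]
    rw [Metric.tendsto_atTop] at ha₀
    intro ε hε
    obtain ⟨N, hN⟩ := ha₀ ε hε
    refine ⟨N, fun m hm => ?_⟩
    rw [Real.dist_eq]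
    exact lt_of_le_of_lt (hμlip _ _) (hN m hm)
  -- maximality of a₀
  have hmax : ∀ b ∈ D, a₀ ≤ b → b = a₀ := by
    intro b hbD hab
    have hb : ∀ n, μ b ≤ μ a₀ + (1/2)^n := by
      intro n
      have h1 : μ b ≤ s (f n).1 :=
        le_csSup (hsbdd _) ⟨b, ⟨hbD, (hlefa n).trans hab⟩, rfl⟩
      have h2 := hflb n
      have h3 : μ (f (n+1)).1 ≤ μ a₀ := hmono _ _ (hlefa (n+1))
      linarith
    have hμb : μ b ≤ μ a₀ := by
      refine le_of_forall_pos_le_add ?_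
      intro ε hε
      obtain ⟨n, hn⟩ := exists_pow_lt_of_lt_one hε (by norm_num : (1/2:ℝ) < 1)
      linarith [hb n]
    exact (hantisymm a₀ b hab hμb).symm
  refine ⟨a₀, ha₀D, ?_⟩
  set t := φ.symm a₀ ⊔ a₀ ⊔ φ a₀ with ht
  -- t belongs to the set
  have htmem : ∀ b ≤ tᶜ, φ b = b := by
    intro b hb
    by_contra hne
    have hbφ : ¬ b ≤ φ b := by
      intro hle
      exact hne ((hantisymm b (φ b) hle (le_of_eq (hpres b))).symm)
    set d := b \ φ b with hd
    have hdne : d ≠ ⊥ := fun h => hbφ (sdiff_eq_bot_iff.mp h)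
    have hdb : d ≤ b := sdiff_le
    have hdt : d ≤ tᶜ := hdb.trans hb
    have h1 : d ⊓ φ a₀ = ⊥ := hc _ _ (hdt.trans (compl_le_compl le_sup_right))
    have h2 : φ d ⊓ a₀ = ⊥ := by
      have hx : d ⊓ φ.symm a₀ = ⊥ :=
        hc _ _ (hdt.trans (compl_le_compl ((le_sup_left).trans le_sup_left)))
      have := congrArg φ hx
      rwa [map_inf, φ.apply_symm_apply, map_bot] at this
    have h3 : d ⊓ φ d = ⊥ := by
      have hd1 : d ≤ (φ b)ᶜ := by rw [hd, sdiff_eq]; exact inf_le_right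
      have hd2 : φ d ≤ φ b := φ.monotone hdb
      refine le_bot_iff.mp ?_
      calc d ⊓ φ d ≤ (φ b)ᶜ ⊓ φ b := inf_le_inf hd1 hd2
        _ = ⊥ := by simp
    have hsupD : (a₀ ⊔ d) ∈ D := by
      show (a₀ ⊔ d) ⊓ φ (a₀ ⊔ d) = ⊥
      rw [map_sup, inf_sup_left, inf_sup_right, inf_sup_right, ha₀D,
        inf_comm a₀ (φ d), h2, h1, h3]
      simp
    have := hmax (a₀ ⊔ d) hsupD le_sup_left
    have hda : d ≤ a₀ := by
      rw [← this]; exact le_sup_right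
    have hda' : d ⊓ a₀ = ⊥ :=
      hc _ _ (hdt.trans (compl_le_compl ((le_sup_right).trans le_sup_left)))
    exact hdne (by rw [← inf_eq_left.mpr hda, hda'])
  -- t is a lower bound
  have hlb : ∀ a : A, (∀ b ≤ aᶜ, φ b = b) → t ≤ a := by
    intro a haS
    have k1 : a₀ ≤ a := by
      refine hle_of _ _ ?_
      have hb := haS (a₀ ⊓ aᶜ) inf_le_right
      have h1 : a₀ ⊓ aᶜ ≤ φ a₀ := by
        rw [← hb]; exact φ.monotone inf_le_left
      refine le_bot_iff.mp ?_
      rw [← ha₀D]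
      exact le_inf inf_le_left h1
    have k2 : φ a₀ ≤ a := by
      refine hle_of _ _ ?_
      have hb := haS (φ a₀ ⊓ aᶜ) inf_le_right
      have h1 : φ a₀ ⊓ aᶜ ≤ a₀ := by
        have : φ.symm (φ a₀ ⊓ aᶜ) = φ a₀ ⊓ aᶜ := by
          conv_lhs => rw [← hb]
          rw [φ.symm_apply_apply]
        rw [← this]
        calc φ.symm (φ a₀ ⊓ aᶜ) ≤ φ.symm (φ a₀) := φ.symm.monotone inf_le_left
          _ = a₀ := φ.symm_apply_apply a₀
      refine le_bot_iff.mp ?_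
      rw [← ha₀D]
      exact le_inf h1 inf_le_left
    have k3 : φ.symm a₀ ≤ a := by
      refine hle_of _ _ ?_
      have hb := haS (φ.symm a₀ ⊓ aᶜ) inf_le_right
      have h1 : φ.symm a₀ ⊓ aᶜ ≤ a₀ := by
        rw [← hb]
        calc φ (φ.symm a₀ ⊓ aᶜ) ≤ φ (φ.symm a₀) := φ.monotone inf_le_left
          _ = a₀ := φ.apply_symm_apply a₀
      have h2 : φ.symm a₀ ⊓ aᶜ ≤ φ a₀ := by
        rw [← hb]; exact φ.monotone h1
      refine le_bot_iff.mp ?_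
      rw [← ha₀D]
      exact le_inf h1 h2
    exact sup_le (sup_le k3 k1) k2
  exact ⟨fun a haS => hlb a haS, fun l hl => hl htmem⟩
end

section
/- Let φ be a measure-preserving automorphism of an atomless probability measure algebra A. Then supp φ = ⋁{φ⁻¹(a) ∨ a ∨ φ(a) : a ∈ A, a ∧ φ(a) = 0}. -/
open scoped symmDiff

/-- Let `φ` be a measure-preserving automorphism of a (separable) atomless
probability measure algebra `A`. Then
`supp φ = ⋁ {φ⁻¹ a ⊔ a ⊔ φ a : a ⊓ φ a = ⊥}`, where `supp φ` is the infimum of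
`{a : ∀ b ≤ ¬ a, φ b = b}` (infima and suprema expressed via `IsGLB`/`IsLUB`). -/
theorem stmt2 {A : Type*} [BooleanAlgebra A] [MetricSpace A] [CompleteSpace A]
    [TopologicalSpace.SeparableSpace A]
    (μ : A → ℝ) (hμ1 : μ ⊤ = 1) (hμ0 : ∀ a : A, 0 ≤ μ a)
    (hadd : ∀ a b : A, a ⊓ b = ⊥ → μ (a ⊔ b) = μ a + μ b)
    (hdist : ∀ a b : A, dist a b = μ (a ∆ b))
    (hatomless : ∀ a : A, ¬ IsAtom a)
    (φ : A ≃o A) (hpres : ∀ a : A, μ (φ a) = μ a)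
    (s : A) (hs : IsGLB {a : A | ∀ b ≤ aᶜ, φ b = b} s) :
    IsLUB {c : A | ∃ a : A, a ⊓ φ a = ⊥ ∧ c = φ.symm a ⊔ a ⊔ φ a} s := by
  -- strict positivity of μ
  have hpos : ∀ x : A, μ x = 0 → x = ⊥ := by
    intro x hx
    have h : dist x ⊥ = 0 := by rw [hdist, symmDiff_bot, hx]
    exact dist_eq_zero.mp h
  -- splitting along an element
  have hsplit : ∀ x y : A, μ x = μ (x ⊓ y) + μ (x \ y) := by
    intro x y
    rw [← hadd _ _ (inf_inf_sdiff x y), sup_inf_sdiff]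
  constructor
  · -- every triple is ≤ s
    rintro c ⟨a, hdisj, rfl⟩
    apply hs.2
    intro t ht
    -- a key fact: if b ≤ a and b ≤ φ a then b = ⊥
    have key : ∀ b : A, b ≤ a → b ≤ φ a → b = ⊥ := by
      intro b h1 h2
      exact le_bot_iff.mp (hdisj ▸ le_inf h1 h2)
    have le_of_compl : ∀ x : A, x ⊓ tᶜ = ⊥ → x ≤ t := by
      intro x hx
      have : x \ t = ⊥ := by rwa [sdiff_eq]
      exact sdiff_eq_bot_iff.mp this
    -- a ≤ t
    have ha : a ≤ t := by
      apply le_of_compl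
      have hb : φ (a ⊓ tᶜ) = a ⊓ tᶜ := ht _ inf_le_right
      refine key _ inf_le_left ?_
      calc a ⊓ tᶜ = φ (a ⊓ tᶜ) := hb.symm
        _ ≤ φ a := φ.monotone inf_le_left
    -- φ a ≤ t
    have hfa : φ a ≤ t := by
      apply le_of_compl
      have hb : φ (φ a ⊓ tᶜ) = φ a ⊓ tᶜ := ht _ inf_le_right
      have hb' : φ.symm (φ a ⊓ tᶜ) = φ a ⊓ tᶜ := by
        conv_lhs => rw [← hb]
        exact φ.symm_apply_apply _
      refine key _ ?_ inf_le_left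
      calc φ a ⊓ tᶜ = φ.symm (φ a ⊓ tᶜ) := hb'.symm
        _ ≤ φ.symm (φ a) := φ.symm.monotone inf_le_left
        _ = a := φ.symm_apply_apply a
    -- φ.symm a ≤ t
    have hsa : φ.symm a ≤ t := by
      apply le_of_compl
      have hb : φ (φ.symm a ⊓ tᶜ) = φ.symm a ⊓ tᶜ := ht _ inf_le_right
      have h1 : φ.symm a ⊓ tᶜ ≤ a := by
        calc φ.symm a ⊓ tᶜ = φ (φ.symm a ⊓ tᶜ) := hb.symm
          _ ≤ φ (φ.symm a) := φ.monotone inf_le_left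
          _ = a := φ.apply_symm_apply a
      refine key _ h1 ?_
      calc φ.symm a ⊓ tᶜ = φ (φ.symm a ⊓ tᶜ) := hb.symm
        _ ≤ φ a := φ.monotone h1
    exact sup_le (sup_le hsa ha) hfa
  · -- s ≤ any upper bound u
    intro u hu
    apply hs.1
    intro b hb
    by_contra hne
    set a : A := b ⊓ (φ b)ᶜ with ha_def
    have hdisj : a ⊓ φ a = ⊥ := by
      have h1 : φ a ≤ φ b := φ.monotone inf_le_left
      have h2 : a ≤ (φ b)ᶜ := inf_le_right
      have : a ⊓ φ a ≤ (φ b)ᶜ ⊓ φ b := inf_le_inf h2 h1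
      rw [compl_inf_eq_bot] at this
      exact le_bot_iff.mp this
    have hane : a ≠ ⊥ := by
      intro h0
      have hble : b ≤ φ b := by
        have : b \ φ b = ⊥ := by rwa [sdiff_eq]
        exact sdiff_eq_bot_iff.mp this
      have hμeq : μ (φ b) = μ b + μ (φ b \ b) := by
        have := hsplit (φ b) b
        rwa [inf_eq_right.mpr hble] at this
      have h0' : μ (φ b \ b) = 0 := by
        have := hpres b
        linarith
      have : φ b \ b = ⊥ := hpos _ h0'
      exact hne (le_antisymm (sdiff_eq_bot_iff.mp this) hble)
    have hcu : φ.symm a ⊔ a ⊔ φ a ≤ u := hu ⟨a, hdisj, rfl⟩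
    have hau : a ≤ u := le_trans (le_sup_of_le_left le_sup_right) hcu
    have haubot : a ≤ u ⊓ uᶜ := le_inf hau (le_trans (le_trans inf_le_left hb) le_rfl)
    rw [inf_compl_eq_bot] at haubot
    exact hane (le_bot_iff.mp haubot)
end

section
/- If f is a measure-preserving bimeasurable bijection of a standard probability space (X,μ) and φ is the induced automorphism of the measure algebra MAlg(X,μ), then the class of the pointwise support {x ∈ X : f(x) ≠ x} in MAlg(X,μ) equals the measure-algebra support of φ. -/
open MeasureTheory

/-- If `f` is a measure-preserving bimeasurable bijection of a standard
probability space `(X,μ)`, then the class of `{x | f x ≠ x}` in the measure algebra is the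
measure-algebra support of the induced automorphism, i.e. it is the greatest lower bound
(modulo null sets) of the family of (classes of) sets `a` such that every measurable `b`
essentially below `¬ a` is essentially fixed by `f`. -/
theorem stmt3 {X : Type*} [MeasurableSpace X] [StandardBorelSpace X]
    (μ : Measure X) [IsProbabilityMeasure μ]
    (f : X ≃ᵐ X) (hf : MeasurePreserving f μ μ) :
    (∀ a : Set X, MeasurableSet a →
        (∀ b : Set X, MeasurableSet b → μ (b ∩ a) = 0 → f ⁻¹' b =ᵐ[μ] b) →
        μ ({x | f x ≠ x} \ a) = 0) ∧
    (∀ c : Set X, MeasurableSet c →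
        (∀ a : Set X, MeasurableSet a →
          (∀ b : Set X, MeasurableSet b → μ (b ∩ a) = 0 → f ⁻¹' b =ᵐ[μ] b) →
          μ (c \ a) = 0) →
        μ (c \ {x | f x ≠ x}) = 0) := by
  constructor
  · intro a ha hP
    obtain ⟨S, hSc, hSm, hSsep⟩ := exists_countable_separating X MeasurableSet Set.univ
    have key : ∀ s ∈ S, μ (((s \ f ⁻¹' s) ∪ (f ⁻¹' s \ s)) \ a) = 0 := by
      intro s hs
      have hsm := hSm s hs
      have h1 : f ⁻¹' (s \ a) =ᵐ[μ] (s \ a) := by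
        refine hP _ (hsm.diff ha) ?_
        simp [Set.diff_inter_self]
      have h2 : f ⁻¹' (sᶜ \ a) =ᵐ[μ] (sᶜ \ a) := by
        refine hP _ (hsm.compl.diff ha) ?_
        simp [Set.inter_diff_self]
      have h1' : μ ((s \ a) \ f ⁻¹' (s \ a)) = 0 := (ae_eq_set.1 h1.symm).1
      have h2' : μ ((sᶜ \ a) \ f ⁻¹' (sᶜ \ a)) = 0 := (ae_eq_set.1 h2.symm).1
      refine measure_mono_null ?_ (measure_union_null h1' h2')
      rintro x ⟨hx, hxa⟩
      rcases hx with ⟨hxs, hxfs⟩ | ⟨hxfs, hxs⟩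
      · exact Or.inl ⟨⟨hxs, hxa⟩, fun h => hxfs h.1⟩
      · exact Or.inr ⟨⟨hxs, hxa⟩, fun h => h.1 hxfs⟩
    have hsub : {x | f x ≠ x} \ a ⊆ ⋃ s ∈ S, ((s \ f ⁻¹' s) ∪ (f ⁻¹' s \ s)) \ a := by
      rintro x ⟨hx, hxa⟩
      have : ¬ ∀ s ∈ S, f x ∈ s ↔ x ∈ s := fun h => hx (hSsep _ trivial _ trivial h)
      push_neg at this
      obtain ⟨s, hs, hne⟩ := this
      refine Set.mem_biUnion hs ?_
      rcases hne with ⟨hfs, hxs⟩ | ⟨hfs, hxs⟩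
      · exact ⟨Or.inr ⟨hfs, hxs⟩, hxa⟩
      · exact ⟨Or.inl ⟨hxs, hfs⟩, hxa⟩
    refine measure_mono_null hsub ?_
    rw [measure_biUnion_null_iff hSc]
    exact key
  · intro c hc hP
    have hSmeas : MeasurableSet {x | f x ≠ x} := by
      letI := upgradeStandardBorel X
      exact (((f.measurable.prodMk measurable_id) isClosed_diagonal.measurableSet)).compl
    refine hP _ hSmeas ?_
    intro b hb hb0
    have hdiff : μ (b \ f ⁻¹' b) = 0 := by
      refine measure_mono_null ?_ hb0
      rintro x ⟨hxb, hxfb⟩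
      exact ⟨hxb, fun h => hxfb (by rw [Set.mem_preimage, h]; exact hxb)⟩
    have hpre : μ (f ⁻¹' b) = μ b := hf.measure_preimage hb.nullMeasurableSet
    have e1 : μ (f ⁻¹' b ∩ b) + μ (f ⁻¹' b \ b) = μ (f ⁻¹' b) :=
      measure_inter_add_diff _ hb
    have e2 : μ (b ∩ f ⁻¹' b) + μ (b \ f ⁻¹' b) = μ b :=
      measure_inter_add_diff _ (f.measurable hb)
    rw [hdiff, add_zero] at e2
    rw [Set.inter_comm, e2, hpre] at e1
    have hfin : μ b ≠ ⊤ := measure_ne_top μ b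
    have hdiff2 : μ (f ⁻¹' b \ b) = 0 :=
      (ENNReal.add_right_inj hfin).1 (by rw [add_zero]; exact e1)
    exact ae_eq_set.2 ⟨hdiff2, hdiff⟩
end

section
/- Let Γ be a countable group, and let α, β be probability-measure-preserving actions of Γ on standard probability spaces (X,μ) and (Y,ν) with the same invariant random subgroup (Stab^α_*μ = Stab^β_*ν). If π : Y → X is a factor map from β to α (i.e., π is measure-preserving and π(γ·y) = γ·π(y) for all γ and almost all y), then for almost every y ∈ Y, Stab^α(π(y)) = Stab^β(y). -/
open MeasureTheory

/-- The space of subgroups of `Γ`, with the Borel structure inherited from `{0,1}^Γ`. -/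
instance subgroupMeasurableSpace (Γ : Type*) [Group Γ] : MeasurableSpace (Subgroup Γ) :=
  MeasurableSpace.comap (fun (H : Subgroup Γ) (g : Γ) => (g ∈ H : Prop)) inferInstance

lemma measurableSet_mem_subgroup {Γ : Type*} [Group Γ] (γ : Γ) :
    MeasurableSet {H : Subgroup Γ | γ ∈ H} := by
  have h1 : Measurable (fun H : Subgroup Γ => (γ ∈ H : Prop)) :=
    (measurable_pi_apply γ).comp (Measurable.of_comap_le le_rfl)
  have : {H : Subgroup Γ | γ ∈ H} = (fun H : Subgroup Γ => (γ ∈ H : Prop)) ⁻¹' {p | p} := rfl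
  rw [this]
  exact h1 (by trivial)

/-- If `α` and `β` are pmp actions of a countable group `Γ` on standard
probability spaces `(X,μ)` and `(Y,ν)` with the same invariant random subgroup, and
`π : Y → X` is a factor map from `β` to `α`, then for almost every `y`,
`Stab (π y) = Stab y`. -/
theorem stmt5 {Γ X Y : Type*} [Group Γ] [Countable Γ]
    [MeasurableSpace X] [StandardBorelSpace X] [MeasurableSpace Y] [StandardBorelSpace Y]
    [MulAction Γ X] [MulAction Γ Y]
    (μ : Measure X) (ν : Measure Y) [IsProbabilityMeasure μ] [IsProbabilityMeasure ν]
    (hα : ∀ γ : Γ, MeasurePreserving (fun x : X => γ • x) μ μ)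
    (hβ : ∀ γ : Γ, MeasurePreserving (fun y : Y => γ • y) ν ν)
    (hmX : Measurable (fun x : X => MulAction.stabilizer Γ x))
    (hmY : Measurable (fun y : Y => MulAction.stabilizer Γ y))
    (π : Y → X) (hπ : MeasurePreserving π ν μ)
    (hequiv : ∀ᵐ y ∂ν, ∀ γ : Γ, π (γ • y) = γ • π y)
    (hirs : Measure.map (fun x : X => MulAction.stabilizer Γ x) μ
          = Measure.map (fun y : Y => MulAction.stabilizer Γ y) ν) :
    ∀ᵐ y ∂ν, MulAction.stabilizer Γ (π y) = MulAction.stabilizer Γ y := by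
  have key : ∀ γ : Γ, ∀ᵐ y ∂ν, (γ ∈ MulAction.stabilizer Γ (π y) ↔ γ ∈ MulAction.stabilizer Γ y) := by
    intro γ
    set S : Set (Subgroup Γ) := {H | γ ∈ H} with hS
    have hSmeas : MeasurableSet S := measurableSet_mem_subgroup γ
    set A : Set Y := (fun y => MulAction.stabilizer Γ (π y)) ⁻¹' S with hAdef
    set B : Set Y := (fun y => MulAction.stabilizer Γ y) ⁻¹' S with hBdef
    have hA : MeasurableSet A := (hmX.comp hπ.measurable) hSmeas
    have hB : MeasurableSet B := hmY hSmeas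
    -- measures agree
    have hmeq : ν A = ν B := by
      have h1 : ν A = μ ((fun x => MulAction.stabilizer Γ x) ⁻¹' S) := by
        have : A = π ⁻¹' ((fun x => MulAction.stabilizer Γ x) ⁻¹' S) := rfl
        rw [this]
        exact hπ.measure_preimage (hmX hSmeas).nullMeasurableSet
      have h2 : μ ((fun x => MulAction.stabilizer Γ x) ⁻¹' S)
          = ν ((fun y => MulAction.stabilizer Γ y) ⁻¹' S) := by
        have := congrArg (fun m : Measure (Subgroup Γ) => m S) hirs
        simpa [Measure.map_apply hmX hSmeas, Measure.map_apply hmY hSmeas] using this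
      rw [h1, h2]
    -- a.e. inclusion B ⊆ A
    have hsub : B ≤ᵐ[ν] A := by
      filter_upwards [hequiv] with y hy hyB
      have h1 : γ ∈ MulAction.stabilizer Γ y := hyB
      have h2 : γ • y = y := h1
      have : γ • π y = π y := by
        rw [← hy γ, h2]
      exact this
    have haeeq : B =ᵐ[ν] A :=
      ae_eq_of_ae_subset_of_measure_ge hsub hmeq.le hB.nullMeasurableSet (measure_ne_top ν A)
    filter_upwards [haeeq.mem_iff] with y hy
    exact ⟨fun h => hy.mpr h, fun h => hy.mp h⟩
  rw [← ae_all_iff] at key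
  filter_upwards [key] with y hy
  ext γ
  exact hy γ
end

section
/- Let Γ be a countable group and let Γ act measure-preservingly on a standard probability space (X,μ). The action is hyperfinite if and only if for every finite symmetric S ⊆ Γ, the Schreier graphing G_{α,S} is hyperfinite as a graphing (i.e., for every ε > 0 one can remove a Borel set of edges of edge-measure less than ε so that all remaining components have size at most some finite M). -/
open MeasureTheory
open scoped ENNReal Pointwise

/-- The edge measure of a set `Z` of (ordered) edges. -/
noncomputable def edgeMeasure {X : Type*} [MeasurableSpace X] (μ : Measure X)
    (Z : Set (X × X)) : ℝ≥0∞ :=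
  ∫⁻ x, (∑' _ : {y : X // (x, y) ∈ Z}, (1 : ℝ≥0∞)) ∂μ

/-- Connectivity relation generated by an edge set. -/
def componentRel {X : Type*} (E : Set (X × X)) : X → X → Prop :=
  Relation.ReflTransGen (fun x y => (x, y) ∈ E)

/-- A graphing with edge set `E` is hyperfinite if for every `ε > 0` one can remove a Borel
symmetric set `Z` of edges with `μ_E(Z) < ε` so that all remaining connected components are
finite of size at most some `M`. -/
def HyperfiniteGraphing {X : Type*} [MeasurableSpace X] (μ : Measure X)
    (E : Set (X × X)) : Prop :=
  ∀ ε : ℝ, 0 < ε → ∃ (M : ℕ) (Z : Set (X × X)), Z ⊆ E ∧ MeasurableSet Z ∧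
    (∀ p ∈ Z, (Prod.snd p, Prod.fst p) ∈ Z) ∧
    edgeMeasure μ Z < ENNReal.ofReal ε ∧
    ∀ x : X, {y : X | componentRel (E \ Z) x y}.Finite ∧
      Set.ncard {y : X | componentRel (E \ Z) x y} ≤ M

/-- The (ordered-pair) edge set of the Schreier graph of the action of `Γ` on `X` relative
to `S ⊆ Γ`: `(x,y)` is an edge iff `x ≠ y` and `y = s • x` for some `s ∈ S`. -/
def schreierEdges (Γ : Type*) {X : Type*} [Group Γ] [MulAction Γ X] (S : Set Γ) :
    Set (X × X) :=
  {p | p.1 ≠ p.2 ∧ ∃ s ∈ S, p.2 = s • p.1}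

/-- A pmp action of `Γ` on `(X,μ)` is hyperfinite if for every finite `S ⊆ Γ` and `ε > 0`
there is a finite group `G` acting on `(X,μ)` by pmp transformations such that
`μ {x | S • x ⊆ G • x} > 1 - ε`. -/
def HyperfiniteAction (Γ : Type*) {X : Type*} [Group Γ] [MulAction Γ X]
    [MeasurableSpace X] (μ : Measure X) : Prop :=
  ∀ (S : Finset Γ) (ε : ℝ), 0 < ε →
    ∃ (G : Type) (_ : Group G) (_ : Fintype G) (a : G → X → X),
      (∀ g : G, MeasurePreserving (a g) μ μ) ∧
      (∀ x : X, a 1 x = x) ∧ (∀ (g h : G) (x : X), a (g * h) x = a g (a h x)) ∧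
      μ {x : X | ∀ s ∈ S, ∃ g : G, a g x = s • x} > ENNReal.ofReal (1 - ε)

open Function MeasureTheory

namespace Stmt8Aux


variable {α : Type*} [LinearOrder α]

/-- Cyclic successor within a finite set `B`. -/
noncomputable def nextB (B : Finset α) (t : α) : α :=
  if h : (B.filter (fun z => t < z)).Nonempty then (B.filter (fun z => t < z)).min' h
  else if h2 : B.Nonempty then B.min' h2 else t

lemma nextB_mem {B : Finset α} {t : α} (ht : t ∈ B) : nextB B t ∈ B := by
  unfold nextB
  split_ifs with h h2
  · exact (Finset.mem_filter.1 ((B.filter _).min'_mem h)).1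
  · exact B.min'_mem h2
  · exact ht

lemma nextB_eq_iff {B : Finset α} {t u : α} (ht : t ∈ B) (hu : u ∈ B) :
    nextB B t = u ↔
      ((t < u ∧ ∀ b ∈ B, t < b → u ≤ b) ∨ ((∀ b ∈ B, b ≤ t) ∧ ∀ b ∈ B, u ≤ b)) := by
  have hB : B.Nonempty := ⟨t, ht⟩
  constructor
  · intro h
    by_cases hab : (B.filter (fun z => t < z)).Nonempty
    · left
      have h1 : nextB B t = (B.filter (fun z => t < z)).min' hab := by
        rw [nextB, dif_pos hab]
      rw [h1] at h
      subst h
      constructor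
      · exact (Finset.mem_filter.1 ((B.filter _).min'_mem hab)).2
      · intro b hb htb
        exact Finset.min'_le _ b (Finset.mem_filter.2 ⟨hb, htb⟩)
    · right
      have h1 : nextB B t = B.min' hB := by rw [nextB, dif_neg hab, dif_pos hB]
      rw [h1] at h
      subst h
      constructor
      · intro b hb
        by_contra hlt
        exact hab ⟨b, Finset.mem_filter.2 ⟨hb, lt_of_not_ge hlt⟩⟩
      · intro b hb
        exact Finset.min'_le _ b hb
  · rintro (⟨h1, h2⟩ | ⟨h1, h2⟩)
    · have hab : (B.filter (fun z => t < z)).Nonempty := ⟨u, Finset.mem_filter.2 ⟨hu, h1⟩⟩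
      rw [nextB, dif_pos hab]
      apply le_antisymm
      · exact Finset.min'_le _ u (Finset.mem_filter.2 ⟨hu, h1⟩)
      · apply Finset.le_min'
        intro z hz
        obtain ⟨hzB, htz⟩ := Finset.mem_filter.1 hz
        exact h2 z hzB htz
    · have hab : ¬ (B.filter (fun z => t < z)).Nonempty := by
        rintro ⟨b, hb⟩
        obtain ⟨hbB, htb⟩ := Finset.mem_filter.1 hb
        exact absurd htb (not_lt.2 (h1 b hbB))
      rw [nextB, dif_neg hab, dif_pos hB]
      apply le_antisymm
      · exact Finset.min'_le _ u hu
      · exact Finset.le_min' _ _ _ h2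

lemma nextB_reach_min {B : Finset α} (hB : B.Nonempty) :
    ∀ n (t : α), t ∈ B → (B.filter (fun z => t < z)).card = n →
      (nextB B)^[n+1] t = B.min' hB := by
  intro n
  induction n with
  | zero =>
    intro t ht hc
    have h : ¬ (B.filter (fun z => t < z)).Nonempty := by
      rw [← Finset.card_ne_zero] at *; simp_all
    simp [nextB, h, hB]
  | succ n ih =>
    intro t ht hc
    have h : (B.filter (fun z => t < z)).Nonempty := by
      rw [← Finset.card_pos, hc]; omega
    set m := (B.filter (fun z => t < z)).min' h with hm
    have hmB : m ∈ B := (Finset.mem_filter.1 ((B.filter _).min'_mem h)).1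
    have htm : t < m := (Finset.mem_filter.1 ((B.filter _).min'_mem h)).2
    have hfe : B.filter (fun z => m < z) = (B.filter (fun z => t < z)).erase m := by
      ext z
      simp only [Finset.mem_erase, Finset.mem_filter]
      constructor
      · rintro ⟨hz, hmz⟩
        exact ⟨ne_of_gt hmz, hz, lt_trans htm hmz⟩
      · rintro ⟨hne, hz, htz⟩
        refine ⟨hz, lt_of_le_of_ne ?_ (Ne.symm hne)⟩
        exact (B.filter (fun z => t < z)).min'_le z (Finset.mem_filter.2 ⟨hz, htz⟩)
    have hcard : (B.filter (fun z => m < z)).card = n := by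
      rw [hfe, Finset.card_erase_of_mem (Finset.mem_filter.2 ⟨hmB, htm⟩), hc]
      omega
    have hstep : nextB B t = m := by simp [nextB, h, hm]
    rw [iterate_succ_apply, hstep, ih m hmB hcard]

lemma nextB_reach_from_min {B : Finset α} (hB : B.Nonempty) :
    ∀ n (u : α), u ∈ B → (B.filter (fun z => z < u)).card = n →
      (nextB B)^[n] (B.min' hB) = u := by
  intro n
  induction n with
  | zero =>
    intro u hu hc
    have : ∀ z ∈ B, ¬ z < u := by
      intro z hz hlt
      have : z ∈ B.filter (fun z => z < u) := Finset.mem_filter.2 ⟨hz, hlt⟩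
      rw [Finset.card_eq_zero] at hc; simp [hc] at this
    have h1 : B.min' hB ≤ u := B.min'_le u hu
    have h2 : u ≤ B.min' hB := le_of_not_gt (this _ (B.min'_mem hB))
    simpa using (le_antisymm h2 h1).symm
  | succ n ih =>
    intro u hu hc
    have hne : (B.filter (fun z => z < u)).Nonempty := by
      rw [← Finset.card_pos, hc]; omega
    set p := (B.filter (fun z => z < u)).max' hne with hp
    have hpB : p ∈ B := (Finset.mem_filter.1 ((B.filter _).max'_mem hne)).1
    have hpu : p < u := (Finset.mem_filter.1 ((B.filter _).max'_mem hne)).2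
    have habove : (B.filter (fun z => p < z)).Nonempty := ⟨u, Finset.mem_filter.2 ⟨hu, hpu⟩⟩
    have hmin : (B.filter (fun z => p < z)).min' habove = u := by
      apply le_antisymm
      · exact Finset.min'_le _ _ (Finset.mem_filter.2 ⟨hu, hpu⟩)
      · apply Finset.le_min'
        intro z hz
        obtain ⟨hzB, hpz⟩ := Finset.mem_filter.1 hz
        by_contra hlt
        push_neg at hlt
        have : z ≤ p := Finset.le_max' (B.filter (fun z => z < u)) z (Finset.mem_filter.2 ⟨hzB, hlt⟩)
        exact absurd hpz (not_lt.2 this)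
    have hstep : nextB B p = u := by rw [nextB, dif_pos habove, hmin]
    have hfe : B.filter (fun z => z < p) = (B.filter (fun z => z < u)).erase p := by
      ext z
      simp only [Finset.mem_erase, Finset.mem_filter]
      constructor
      · rintro ⟨hz, hzp⟩
        exact ⟨ne_of_lt hzp, hz, lt_trans hzp hpu⟩
      · rintro ⟨hne', hz, hzu⟩
        refine ⟨hz, lt_of_le_of_ne ?_ hne'⟩
        exact Finset.le_max' (B.filter (fun z => z < u)) z (Finset.mem_filter.2 ⟨hz, hzu⟩)
    have hcard : (B.filter (fun z => z < p)).card = n := by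
      rw [hfe, Finset.card_erase_of_mem (a := p) (s := B.filter (fun z => z < u)) (Finset.mem_filter.2 ⟨hpB, hpu⟩), hc]
      omega
    rw [iterate_succ_apply', ih p hpB hcard, hstep]

lemma card_split {B : Finset α} {t : α} (ht : t ∈ B) :
    (B.filter (fun z => z < t)).card + 1 + (B.filter (fun z => t < z)).card = B.card := by
  classical
  have h1 : B.filter (fun z => ¬ t < z) = (B.filter (fun z => z < t)) ∪ {t} := by
    ext z
    simp only [Finset.mem_filter, Finset.mem_union, Finset.mem_singleton, not_lt]
    constructor
    · rintro ⟨hz, hle⟩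
      rcases lt_or_eq_of_le hle with h | h
      · exact Or.inl ⟨hz, h⟩
      · exact Or.inr h
    · rintro (⟨hz, hlt⟩ | rfl)
      · exact ⟨hz, le_of_lt hlt⟩
      · exact ⟨ht, le_refl _⟩
  have h2 : Disjoint (B.filter (fun z => z < t)) ({t} : Finset α) := by
    simp only [Finset.disjoint_singleton_right, Finset.mem_filter]
    rintro ⟨-, h⟩; exact absurd rfl (ne_of_lt h)
  have h3 := Finset.card_filter_add_card_filter_not (s := B) (p := fun z => t < z)
  rw [h1, Finset.card_union_of_disjoint h2, Finset.card_singleton] at h3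
  omega

lemma nextB_period {B : Finset α} {t : α} (ht : t ∈ B) :
    (nextB B)^[B.card] t = t := by
  have hB : B.Nonempty := ⟨t, ht⟩
  have h1 := nextB_reach_min hB _ t ht rfl
  have h2 := nextB_reach_from_min hB _ t ht rfl
  have := card_split ht
  calc (nextB B)^[B.card] t
      = (nextB B)^[(B.filter (fun z => z < t)).card + ((B.filter (fun z => t < z)).card + 1)] t := by
        rw [show (B.filter (fun z => z < t)).card + ((B.filter (fun z => t < z)).card + 1) = B.card by omega]
    _ = (nextB B)^[(B.filter (fun z => z < t)).card] ((nextB B)^[(B.filter (fun z => t < z)).card + 1] t) := by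
        rw [iterate_add_apply]
    _ = t := by rw [h1, h2]

lemma nextB_reach {B : Finset α} {t u : α} (ht : t ∈ B) (hu : u ∈ B) :
    ∃ k, (nextB B)^[k] t = u := by
  have hB : B.Nonempty := ⟨t, ht⟩
  refine ⟨(B.filter (fun z => z < u)).card + ((B.filter (fun z => t < z)).card + 1), ?_⟩
  rw [iterate_add_apply, nextB_reach_min hB _ t ht rfl, nextB_reach_from_min hB _ u hu rfl]



section words
variable {Γ X : Type*} [Group Γ] [MulAction Γ X] [DecidableEq Γ]

/-- Words of length at most `n` in the alphabet `T`. -/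
def WW (T : Finset Γ) : ℕ → Finset Γ
  | 0 => {1}
  | n + 1 => WW T n ∪ T * WW T n

variable (T : Finset Γ) (E' : Set (X × X))

/-- `QQ n w x` : `w • x` is reachable from `x` in at most `n` steps along `E'`,
with intermediate points expressed by words. -/
def QQ : ℕ → Γ → X → Prop
  | 0, w, x => w • x = x
  | n + 1, w, x => QQ n w x ∨ ∃ v ∈ WW T n, QQ n v x ∧ (v • x, w • x) ∈ E'

lemma one_mem_WW : ∀ n, (1 : Γ) ∈ WW T n
  | 0 => Finset.mem_singleton_self 1
  | n + 1 => Finset.mem_union_left _ (one_mem_WW n)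

lemma WW_mono {m n : ℕ} (h : m ≤ n) : WW T m ⊆ WW T n := by
  induction n with
  | zero => simpa [Nat.le_zero.1 h] using Finset.Subset.refl _
  | succ n ih =>
    rcases Nat.lt_or_ge m (n+1) with h' | h'
    · exact (ih (Nat.lt_succ_iff.1 h')).trans (Finset.subset_union_left)
    · have : m = n + 1 := le_antisymm h h'
      subst this; exact Finset.Subset.refl _

lemma QQ_mono_step {n : ℕ} {w : Γ} {x : X} (h : QQ T E' n w x) : QQ T E' (n+1) w x :=
  Or.inl h

lemma QQ_mono {m n : ℕ} (h : m ≤ n) {w : Γ} {x : X} (hq : QQ T E' m w x) :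
    QQ T E' n w x := by
  induction n with
  | zero => simpa [Nat.le_zero.1 h] using hq
  | succ n ih =>
    rcases Nat.lt_or_ge m (n+1) with h' | h'
    · exact QQ_mono_step T E' (ih (Nat.lt_succ_iff.1 h'))
    · have : m = n + 1 := le_antisymm h h'
      subst this; exact hq

lemma QQ_one (n : ℕ) (x : X) : QQ T E' n (1 : Γ) x := by
  induction n with
  | zero => simp [QQ]
  | succ n ih => exact Or.inl ih

lemma QQ_comp {n : ℕ} {w : Γ} {x : X} (h : QQ T E' n w x) :
    componentRel E' x (w • x) := by
  induction n generalizing w with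
  | zero =>
    simp only [QQ] at h; rw [h]; exact Relation.ReflTransGen.refl
  | succ n ih =>
    rcases h with h | ⟨v, _, hv, he⟩
    · exact ih h
    · exact Relation.ReflTransGen.tail (ih hv) he

/-- Reachable set at level `n`. -/
def CC (n : ℕ) (x : X) : Set X := {y | ∃ w ∈ WW T (n : ℕ), QQ T E' n w x ∧ y = w • x}

lemma self_mem_CC (n : ℕ) (x : X) : x ∈ CC T E' n x :=
  ⟨1, one_mem_WW T n, QQ_one T E' n x, (one_smul Γ x).symm⟩

lemma CC_mono {m n : ℕ} (h : m ≤ n) (x : X) : CC T E' m x ⊆ CC T E' n x := by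
  rintro y ⟨w, hw, hq, rfl⟩
  exact ⟨w, WW_mono T h hw, QQ_mono T E' h hq, rfl⟩

lemma CC_subset_comp (n : ℕ) (x : X) : CC T E' n x ⊆ {y | componentRel E' x y} := by
  rintro y ⟨w, _, hq, rfl⟩
  exact QQ_comp T E' hq

lemma comp_subset_CC_of_stab (hE' : ∀ p ∈ E', ∃ s ∈ T, p.2 = s • p.1)
    {n : ℕ} {x : X} (hstab : CC T E' (n+1) x = CC T E' n x) :
    {y | componentRel E' x y} ⊆ CC T E' n x := by
  intro y hy
  induction hy with
  | refl => exact self_mem_CC T E' n x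
  | tail h he ih =>
    rename_i b c
    obtain ⟨v, hvW, hvQ, rfl⟩ := ih
    obtain ⟨s, hs, hc⟩ := hE' _ he
    simp only at hc
    have hc' : c = (s * v) • x := by rw [hc, mul_smul]
    have : c ∈ CC T E' (n+1) x := by
      refine ⟨s * v, Finset.mem_union_right _ (Finset.mul_mem_mul hs hvW), ?_, hc'⟩
      exact Or.inr ⟨v, hvW, hvQ, hc' ▸ he⟩
    rwa [hstab] at this

lemma comp_eq_CC (hE' : ∀ p ∈ E', ∃ s ∈ T, p.2 = s • p.1) {M : ℕ} {x : X}
    (hfin : {y | componentRel E' x y}.Finite)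
    (hM : Set.ncard {y | componentRel E' x y} ≤ M) :
    {y | componentRel E' x y} = CC T E' M x := by
  by_cases hstab : ∃ n < M, CC T E' (n+1) x = CC T E' n x
  · obtain ⟨n, hn, hs⟩ := hstab
    apply Set.Subset.antisymm
    · exact (comp_subset_CC_of_stab T E' hE' hs).trans (CC_mono T E' (le_of_lt hn) x)
    · exact CC_subset_comp T E' M x
  · exfalso
    push_neg at hstab
    have hgrow : ∀ n ≤ M, n + 1 ≤ (CC T E' n x).ncard := by
      intro n
      induction n with
      | zero =>
        intro _
        have : x ∈ CC T E' 0 x := self_mem_CC T E' 0 x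
        have hfin0 : (CC T E' 0 x).Finite := hfin.subset (CC_subset_comp T E' 0 x)
        have hne : (CC T E' 0 x).Nonempty := ⟨x, this⟩
        have h1 : 0 < (CC T E' 0 x).ncard := by
          rw [Set.ncard_pos hfin0]; exact hne
        omega
      | succ n ih =>
        intro hn
        have h1 : CC T E' n x ⊂ CC T E' (n+1) x :=
          (CC_mono T E' (Nat.le_succ n) x).ssubset_of_ne
            (fun h => hstab n (by omega) h.symm)
        have hfin1 : (CC T E' (n+1) x).Finite := hfin.subset (CC_subset_comp T E' (n+1) x)
        have := Set.ncard_lt_ncard h1 hfin1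
        have := ih (by omega)
        omega
    have h1 := hgrow M le_rfl
    have h2 : (CC T E' M x).ncard ≤ Set.ncard {y | componentRel E' x y} :=
      Set.ncard_le_ncard (CC_subset_comp T E' M x) hfin
    omega

end words

section succ
variable {Γ X : Type*} [Group Γ] [MulAction Γ X] [DecidableEq Γ]
variable (T : Finset Γ) (E' : Set (X × X)) (M : ℕ) (f : X → ℝ)

open Classical in
/-- The `f`-image of the class of `x`. -/
noncomputable def clsB (x : X) : Finset ℝ :=
  ((WW T M).filter (fun w => QQ T E' M w x)).image (fun w => f (w • x))

lemma mem_clsB_iff {b : ℝ} {x : X} :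
    b ∈ clsB T E' M f x ↔ ∃ u ∈ WW T M, QQ T E' M u x ∧ b = f (u • x) := by
  classical
  simp only [clsB, Finset.mem_image, Finset.mem_filter]
  constructor
  · rintro ⟨u, ⟨h1, h2⟩, h3⟩; exact ⟨u, h1, h2, h3.symm⟩
  · rintro ⟨u, h1, h2, h3⟩; exact ⟨u, ⟨h1, h2⟩, h3.symm⟩

lemma mem_clsB_iff' (hcomp : ∀ x : X, {y | componentRel E' x y} = CC T E' M x)
    {b : ℝ} {x : X} :
    b ∈ clsB T E' M f x ↔ ∃ y, componentRel E' x y ∧ b = f y := by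
  rw [mem_clsB_iff]
  constructor
  · rintro ⟨u, h1, h2, h3⟩
    exact ⟨u • x, QQ_comp T E' h2, h3⟩
  · rintro ⟨y, h1, h3⟩
    have : y ∈ CC T E' M x := by rw [← hcomp x]; exact h1
    obtain ⟨u, hu1, hu2, rfl⟩ := this
    exact ⟨u, hu1, hu2, h3⟩

lemma self_mem_clsB (x : X) : f x ∈ clsB T E' M f x :=
  (mem_clsB_iff T E' M f).2 ⟨1, one_mem_WW T M, QQ_one T E' M x, by rw [one_smul]⟩

/-- `y` is the cyclic `f`-successor of `x` within its class. -/
def SuccP (x y : X) : Prop :=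
  componentRel E' x y ∧ f y = nextB (clsB T E' M f x) (f x)

lemma succ_exists (hcomp : ∀ x : X, {y | componentRel E' x y} = CC T E' M x) (x : X) :
    ∃ y, SuccP T E' M f x y := by
  have h1 : nextB (clsB T E' M f x) (f x) ∈ clsB T E' M f x :=
    nextB_mem (self_mem_clsB T E' M f x)
  obtain ⟨y, hy, hfy⟩ := (mem_clsB_iff' T E' M f hcomp).1 h1
  exact ⟨y, hy, hfy.symm⟩

lemma succ_unique (hf : Function.Injective f) {x y z : X}
    (hy : SuccP T E' M f x y) (hz : SuccP T E' M f x z) : y = z :=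
  hf (hy.2.trans hz.2.symm)

open Classical in
noncomputable def pick : List Γ → X → X
  | [], x => x
  | w :: r, x => if SuccP T E' M f x (w • x) then w • x else pick r x

lemma pick_spec {l : List Γ} {x : X} (h : ∃ w ∈ l, SuccP T E' M f x (w • x)) :
    SuccP T E' M f x (pick T E' M f l x) := by
  classical
  induction l with
  | nil => simp at h
  | cons w r ih =>
    by_cases hw : SuccP T E' M f x (w • x)
    · simpa [pick, hw] using hw
    · simp only [pick, if_neg hw]
      apply ih
      rcases h with ⟨v, hv, hsv⟩
      rcases List.mem_cons.1 hv with rfl | hv'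
      · exact absurd hsv hw
      · exact ⟨v, hv', hsv⟩

noncomputable def Tmap (x : X) : X := pick T E' M f (WW T M).toList x

lemma Tmap_succ (hcomp : ∀ x : X, {y | componentRel E' x y} = CC T E' M x) (x : X) :
    SuccP T E' M f x (Tmap T E' M f x) := by
  obtain ⟨y, hy⟩ := succ_exists T E' M f hcomp x
  have : y ∈ CC T E' M x := by rw [← hcomp x]; exact hy.1
  obtain ⟨w, hw, hq, rfl⟩ := this
  exact pick_spec T E' M f ⟨w, Finset.mem_toList.2 hw, hy⟩

/-! ### Symmetry and invariance -/

lemma comp_symm (hsym : ∀ p ∈ E', (p.2, p.1) ∈ E') {x y : X}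
    (h : componentRel E' x y) : componentRel E' y x := by
  induction h with
  | refl => exact Relation.ReflTransGen.refl
  | tail _ he ih =>
    exact Relation.ReflTransGen.head (hsym _ he) ih

lemma comp_set_eq (hsym : ∀ p ∈ E', (p.2, p.1) ∈ E') {x y : X}
    (h : componentRel E' x y) :
    {z | componentRel E' y z} = {z | componentRel E' x z} := by
  ext z
  exact ⟨fun hz => Relation.ReflTransGen.trans h hz,
    fun hz => Relation.ReflTransGen.trans (comp_symm E' hsym h) hz⟩

lemma clsB_congr (hcomp : ∀ x : X, {y | componentRel E' x y} = CC T E' M x)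
    (hsym : ∀ p ∈ E', (p.2, p.1) ∈ E') {x y : X} (h : componentRel E' x y) :
    clsB T E' M f y = clsB T E' M f x := by
  apply Finset.ext
  intro b
  rw [mem_clsB_iff' T E' M f hcomp, mem_clsB_iff' T E' M f hcomp]
  constructor
  · rintro ⟨z, h1, rfl⟩; exact ⟨z, Relation.ReflTransGen.trans h h1, rfl⟩
  · rintro ⟨z, h1, rfl⟩
    exact ⟨z, Relation.ReflTransGen.trans (comp_symm E' hsym h) h1, rfl⟩

lemma clsB_card_pos (x : X) : 0 < (clsB T E' M f x).card :=
  Finset.card_pos.2 ⟨f x, self_mem_clsB T E' M f x⟩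

section dyn
variable (hcomp : ∀ x : X, {y | componentRel E' x y} = CC T E' M x)
  (hsym : ∀ p ∈ E', (p.2, p.1) ∈ E') (hf : Function.Injective f)

include hcomp hsym hf

lemma Tmap_iterate (x : X) (k : ℕ) :
    f ((Tmap T E' M f)^[k] x) = (nextB (clsB T E' M f x))^[k] (f x) ∧
      componentRel E' x ((Tmap T E' M f)^[k] x) := by
  induction k with
  | zero => exact ⟨rfl, Relation.ReflTransGen.refl⟩
  | succ k ih =>
    obtain ⟨ih1, ih2⟩ := ih
    set y := (Tmap T E' M f)^[k] x with hy
    have hs := Tmap_succ T E' M f hcomp y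
    have hB : clsB T E' M f y = clsB T E' M f x := clsB_congr T E' M f hcomp hsym ih2
    constructor
    · rw [iterate_succ_apply', iterate_succ_apply', hs.2, hB, ih1]
    · rw [iterate_succ_apply']
      exact Relation.ReflTransGen.trans ih2 hs.1

lemma Tmap_reach {x y : X} (h : componentRel E' x y) :
    ∃ k, (Tmap T E' M f)^[k] x = y := by
  have hfy : f y ∈ clsB T E' M f x := (mem_clsB_iff' T E' M f hcomp).2 ⟨y, h, rfl⟩
  have hfx : f x ∈ clsB T E' M f x := self_mem_clsB T E' M f x
  obtain ⟨k, hk⟩ := nextB_reach hfx hfy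
  refine ⟨k, hf ?_⟩
  rw [(Tmap_iterate T E' M f hcomp hsym hf x k).1, hk]

lemma Tmap_period (x : X) :
    (Tmap T E' M f)^[(clsB T E' M f x).card] x = x := by
  apply hf
  rw [(Tmap_iterate T E' M f hcomp hsym hf x _).1,
    nextB_period (self_mem_clsB T E' M f x)]

lemma Tmap_surjective : Function.Surjective (Tmap T E' M f) := by
  intro y
  have hc1 : 0 < (clsB T E' M f y).card := clsB_card_pos T E' M f y
  refine ⟨(Tmap T E' M f)^[(clsB T E' M f y).card - 1] y, ?_⟩
  have h := Tmap_period T E' M f hcomp hsym hf y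
  rw [show (clsB T E' M f y).card = ((clsB T E' M f y).card - 1) + 1 by omega,
    iterate_succ_apply'] at h
  exact h

lemma Tmap_injective : Function.Injective (Tmap T E' M f) := by
  intro x1 x2 h
  have h1 : componentRel E' x1 (Tmap T E' M f x1) := (Tmap_succ T E' M f hcomp x1).1
  have h2 : componentRel E' x2 (Tmap T E' M f x2) := (Tmap_succ T E' M f hcomp x2).1
  have hB1 : clsB T E' M f (Tmap T E' M f x1) = clsB T E' M f x1 :=
    clsB_congr T E' M f hcomp hsym h1
  have hB2 : clsB T E' M f (Tmap T E' M f x2) = clsB T E' M f x2 :=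
    clsB_congr T E' M f hcomp hsym h2
  have hcc : (clsB T E' M f x1).card = (clsB T E' M f x2).card := by
    rw [← hB1, ← hB2, h]
  set c := (clsB T E' M f x1).card with hcdef
  have hc1 : 0 < c := clsB_card_pos T E' M f x1
  have e1 : (Tmap T E' M f)^[c - 1] (Tmap T E' M f x1) = x1 := by
    have hp := Tmap_period T E' M f hcomp hsym hf x1
    rw [show (clsB T E' M f x1).card = c - 1 + 1 by omega, iterate_succ_apply] at hp
    exact hp
  have e2 : (Tmap T E' M f)^[c - 1] (Tmap T E' M f x2) = x2 := by
    have hp := Tmap_period T E' M f hcomp hsym hf x2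
    rw [show (clsB T E' M f x2).card = c - 1 + 1 by omega, iterate_succ_apply] at hp
    exact hp
  rw [← e1, ← e2, h]

lemma clsB_card_le (hfin : ∀ x : X, {y | componentRel E' x y}.Finite)
    (hM : ∀ x : X, Set.ncard {y | componentRel E' x y} ≤ M) (x : X) :
    (clsB T E' M f x).card ≤ M := by
  classical
  have he : clsB T E' M f x = (hfin x).toFinset.image f := by
    apply Finset.ext
    intro b
    rw [mem_clsB_iff' T E' M f hcomp]
    simp only [Finset.mem_image, Set.Finite.mem_toFinset, Set.mem_setOf_eq]
    constructor
    · rintro ⟨y, h1, rfl⟩; exact ⟨y, h1, rfl⟩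
    · rintro ⟨y, h1, rfl⟩; exact ⟨y, h1, rfl⟩
  rw [he]
  calc ((hfin x).toFinset.image f).card ≤ (hfin x).toFinset.card := Finset.card_image_le
    _ = Set.ncard {y | componentRel E' x y} := (Set.ncard_eq_toFinset_card _ (hfin x)).symm
    _ ≤ M := hM x

lemma Tmap_factorial (hfin : ∀ x : X, {y | componentRel E' x y}.Finite)
    (hM : ∀ x : X, Set.ncard {y | componentRel E' x y} ≤ M) (x : X) :
    (Tmap T E' M f)^[M.factorial] x = x := by
  set c := (clsB T E' M f x).card with hc
  have h1 : 0 < c := clsB_card_pos T E' M f x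
  have h2 : c ≤ M := clsB_card_le T E' M f hcomp hsym hf hfin hM x
  obtain ⟨q, hq⟩ := Nat.dvd_factorial h1 h2
  rw [hq, Function.iterate_mul]
  exact Function.iterate_fixed (Tmap_period T E' M f hcomp hsym hf x) q

end dyn
end succ

section meashelpers
variable {X : Type*} [MeasurableSpace X]

lemma measurableSet_imp {p q : X → Prop} (hp : MeasurableSet {x | p x})
    (hq : MeasurableSet {x | q x}) : MeasurableSet {x | p x → q x} := by
  have : {x | p x → q x} = {x | p x}ᶜ ∪ {x | q x} := by
    ext x; simp [imp_iff_not_or]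
  rw [this]; exact hp.compl.union hq

lemma measurableSet_ball {Γ : Type*} (W : Finset Γ) {p : Γ → X → Prop}
    (h : ∀ u ∈ W, MeasurableSet {x | p u x}) :
    MeasurableSet {x | ∀ u ∈ W, p u x} := by
  have : {x | ∀ u ∈ W, p u x} = ⋂ u ∈ (W : Set Γ), {x | p u x} := by
    ext x; simp
  rw [this]
  exact MeasurableSet.biInter W.countable_toSet (fun u hu => h u hu)

lemma measurableSet_bex {Γ : Type*} (W : Finset Γ) {p : Γ → X → Prop}
    (h : ∀ u ∈ W, MeasurableSet {x | p u x}) :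
    MeasurableSet {x | ∃ u ∈ W, p u x} := by
  have : {x | ∃ u ∈ W, p u x} = ⋃ u ∈ (W : Set Γ), {x | p u x} := by
    ext x; simp
  rw [this]
  exact MeasurableSet.biUnion W.countable_toSet (fun u hu => h u hu)

end meashelpers

section meas
variable {Γ X : Type*} [Group Γ] [MulAction Γ X] [DecidableEq Γ] [MeasurableSpace X]
variable (T : Finset Γ) (E' : Set (X × X)) (M : ℕ) (f : X → ℝ)
variable (hE'm : MeasurableSet E') (hsmul : ∀ γ : Γ, Measurable (fun x : X => γ • x))
  (hfm : Measurable f) (hf : Function.Injective f)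

include hE'm hsmul hfm hf in
lemma measurable_QQ : ∀ (n : ℕ) (w : Γ), MeasurableSet {x | QQ T E' n w x} := by
  intro n
  induction n with
  | zero =>
    intro w
    have : {x : X | QQ T E' 0 w x} = {x | f (w • x) = f x} := by
      ext x
      exact ⟨fun h => congrArg f h, fun h => hf h⟩
    rw [this]
    exact measurableSet_eq_fun (hfm.comp (hsmul w)) hfm
  | succ n ih =>
    intro w
    have : {x : X | QQ T E' (n+1) w x} =
        {x | QQ T E' n w x} ∪
          ⋃ v ∈ (WW T n : Set Γ),
            ({x | QQ T E' n v x} ∩ (fun x => (v • x, w • x)) ⁻¹' E') := by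
      ext x
      simp only [QQ, Set.mem_union, Set.mem_iUnion, Set.mem_inter_iff, Set.mem_preimage,
        Set.mem_setOf_eq, Finset.mem_coe, exists_prop]
    rw [this]
    exact (ih w).union (MeasurableSet.biUnion (WW T n).countable_toSet
      (fun v _ => (ih v).inter (((hsmul v).prodMk (hsmul w)) hE'm)))

lemma SuccP_iff (hcomp : ∀ x : X, {y | componentRel E' x y} = CC T E' M x)
    (hf : Function.Injective f) (w : Γ) (x : X) :
    SuccP T E' M f x (w • x) ↔
      (∃ u ∈ WW T M, QQ T E' M u x ∧ f (w • x) = f (u • x)) ∧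
      ((f x < f (w • x) ∧
          ∀ u ∈ WW T M, QQ T E' M u x → f x < f (u • x) → f (w • x) ≤ f (u • x)) ∨
        ((∀ u ∈ WW T M, QQ T E' M u x → f (u • x) ≤ f x) ∧
          ∀ u ∈ WW T M, QQ T E' M u x → f (w • x) ≤ f (u • x))) := by
  constructor
  · rintro ⟨h1, h2⟩
    have hmem : f (w • x) ∈ clsB T E' M f x :=
      (mem_clsB_iff' T E' M f hcomp).2 ⟨w • x, h1, rfl⟩
    have hx : w • x ∈ CC T E' M x := by rw [← hcomp x]; exact h1
    obtain ⟨u, hu, hq, heq⟩ := hx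
    refine ⟨⟨u, hu, hq, congrArg f heq⟩, ?_⟩
    have h3 := (nextB_eq_iff (self_mem_clsB T E' M f x) hmem).1 h2.symm
    rcases h3 with ⟨ha, hb⟩ | ⟨ha, hb⟩
    · left
      refine ⟨ha, fun u' hu' hq' hlt => ?_⟩
      exact hb _ ((mem_clsB_iff T E' M f).2 ⟨u', hu', hq', rfl⟩) hlt
    · right
      refine ⟨fun u' hu' hq' => ha _ ((mem_clsB_iff T E' M f).2 ⟨u', hu', hq', rfl⟩),
        fun u' hu' hq' => hb _ ((mem_clsB_iff T E' M f).2 ⟨u', hu', hq', rfl⟩)⟩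
  · rintro ⟨⟨u, hu, hq, heq⟩, h2⟩
    have hwx : w • x = u • x := hf heq
    have h1 : componentRel E' x (w • x) := by rw [hwx]; exact QQ_comp T E' hq
    have hmem : f (w • x) ∈ clsB T E' M f x :=
      (mem_clsB_iff T E' M f).2 ⟨u, hu, hq, heq⟩
    refine ⟨h1, ?_⟩
    symm
    apply (nextB_eq_iff (self_mem_clsB T E' M f x) hmem).2
    rcases h2 with ⟨ha, hb⟩ | ⟨ha, hb⟩
    · left
      refine ⟨ha, fun b hbm hlt => ?_⟩
      obtain ⟨v, hv, hqv, rfl⟩ := (mem_clsB_iff T E' M f).1 hbm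
      exact hb v hv hqv hlt
    · right
      constructor
      · intro b hbm
        obtain ⟨v, hv, hqv, rfl⟩ := (mem_clsB_iff T E' M f).1 hbm
        exact ha v hv hqv
      · intro b hbm
        obtain ⟨v, hv, hqv, rfl⟩ := (mem_clsB_iff T E' M f).1 hbm
        exact hb v hv hqv

include hE'm hsmul hfm hf in
lemma measurable_SuccP (hcomp : ∀ x : X, {y | componentRel E' x y} = CC T E' M x)
    (w : Γ) : MeasurableSet {x | SuccP T E' M f x (w • x)} := by
  have hQ := measurable_QQ T E' f hE'm hsmul hfm hf
  have hrw : {x : X | SuccP T E' M f x (w • x)} =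
      {x | (∃ u ∈ WW T M, QQ T E' M u x ∧ f (w • x) = f (u • x)) ∧
        ((f x < f (w • x) ∧
            ∀ u ∈ WW T M, QQ T E' M u x → f x < f (u • x) → f (w • x) ≤ f (u • x)) ∨
          ((∀ u ∈ WW T M, QQ T E' M u x → f (u • x) ≤ f x) ∧
            ∀ u ∈ WW T M, QQ T E' M u x → f (w • x) ≤ f (u • x)))} := by
    ext x
    exact SuccP_iff T E' M f hcomp hf w x
  rw [hrw]
  have fm : ∀ v : Γ, Measurable (fun x : X => f (v • x)) :=
    fun v => hfm.comp (hsmul v)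
  apply MeasurableSet.inter
  · apply measurableSet_bex
    intro u _
    exact (hQ M u).inter (measurableSet_eq_fun (fm w) (fm u))
  · apply MeasurableSet.union
    · apply MeasurableSet.inter
      · exact measurableSet_lt hfm (fm w)
      · apply measurableSet_ball
        intro u _
        exact measurableSet_imp (hQ M u)
          (measurableSet_imp (measurableSet_lt hfm (fm u)) (measurableSet_le (fm w) (fm u)))
    · apply MeasurableSet.inter
      · apply measurableSet_ball
        intro u _
        exact measurableSet_imp (hQ M u) (measurableSet_le (fm u) hfm)
      · apply measurableSet_ball
        intro u _
        exact measurableSet_imp (hQ M u) (measurableSet_le (fm w) (fm u))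

include hE'm hsmul hfm hf in
lemma measurable_Tmap (hcomp : ∀ x : X, {y | componentRel E' x y} = CC T E' M x) :
    Measurable (Tmap T E' M f) := by
  classical
  suffices h : ∀ l : List Γ, Measurable (pick T E' M f l) from h _
  intro l
  induction l with
  | nil => exact measurable_id
  | cons w r ih =>
    have : pick T E' M f (w :: r) =
        fun x => if SuccP T E' M f x (w • x) then w • x else pick T E' M f r x := rfl
    rw [this]
    exact Measurable.ite (measurable_SuccP T E' M f hE'm hsmul hfm hf hcomp w) (hsmul w) ih

end meas

section pmp
open MeasureTheory
variable {Γ X : Type*} [Group Γ] [Countable Γ] [MulAction Γ X] [MeasurableSpace X]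

lemma pmp_piecewise (μ : Measure X)
    (hpmp : ∀ γ : Γ, MeasurePreserving (fun x : X => γ • x) μ μ)
    (f : X → ℝ) (hfm : Measurable f) (hf : Function.Injective f)
    (φ : X → X) (hφ : Measurable φ) (hinj : Function.Injective φ)
    (hsurj : Function.Surjective φ) (hcov : ∀ x, ∃ γ : Γ, φ x = γ • x) :
    MeasurePreserving φ μ μ := by
  obtain ⟨e, he⟩ := Countable.exists_injective_nat Γ
  set D : Γ → Set X :=
    fun γ => {x | φ x = γ • x ∧ ∀ γ' : Γ, e γ' < e γ → φ x ≠ γ' • x} with hD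
  have hsmul : ∀ γ : Γ, Measurable (fun x : X => γ • x) := fun γ => (hpmp γ).measurable
  have hEqm : ∀ γ : Γ, MeasurableSet {x | φ x = γ • x} := by
    intro γ
    have : {x | φ x = γ • x} = {x | f (φ x) = f (γ • x)} := by
      ext x; exact ⟨fun h => congrArg f h, fun h => hf h⟩
    rw [this]
    exact measurableSet_eq_fun (hfm.comp hφ) (hfm.comp (hsmul γ))
  have hDm : ∀ γ, MeasurableSet (D γ) := by
    intro γ
    have : D γ = {x | φ x = γ • x} ∩ ⋂ γ' : Γ, {x | e γ' < e γ → ¬ φ x = γ' • x} := by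
      ext x; simp [hD]
    rw [this]
    refine (hEqm γ).inter (MeasurableSet.iInter fun γ' => ?_)
    exact measurableSet_imp (MeasurableSet.const _) (hEqm γ').compl
  have hDdisj : Pairwise (Function.onFun Disjoint D) := by
    intro γ1 γ2 hne
    rw [Function.onFun, Set.disjoint_left]
    rintro x ⟨h1, h1'⟩ ⟨h2, h2'⟩
    rcases Nat.lt_trichotomy (e γ1) (e γ2) with h | h | h
    · exact h2' γ1 h h1
    · exact hne (he h)
    · exact h1' γ2 h h2
  have hDcov : ∀ x, ∃ γ, x ∈ D γ := by
    intro x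
    set N : Set ℕ := e '' {γ | φ x = γ • x} with hN
    have hNne : N.Nonempty := by
      obtain ⟨γ, hγ⟩ := hcov x
      exact ⟨e γ, γ, hγ, rfl⟩
    obtain ⟨γ0, hγ0, hγ0e⟩ := Nat.sInf_mem hNne
    refine ⟨γ0, hγ0, fun γ' hlt hcontra => ?_⟩
    have : e γ' ∈ N := ⟨γ', hcontra, rfl⟩
    have := Nat.sInf_le this
    omega
  have hDuniv : ⋃ γ, D γ = Set.univ := by
    ext x
    simp only [Set.mem_iUnion, Set.mem_univ, iff_true]
    exact hDcov x
  -- image sets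
  set Ee : Γ → Set X := fun γ => (fun x => γ⁻¹ • x) ⁻¹' (D γ) with hEe
  have hEem : ∀ γ, MeasurableSet (Ee γ) := fun γ => (hsmul γ⁻¹) (hDm γ)
  have hEeimg : ∀ γ, Ee γ = φ '' (D γ) := by
    intro γ
    ext y
    simp only [hEe, Set.mem_preimage, Set.mem_image]
    constructor
    · intro hy
      exact ⟨γ⁻¹ • y, hy, by rw [hy.1, smul_inv_smul]⟩
    · rintro ⟨d, hd, rfl⟩
      have : γ⁻¹ • φ d = d := by rw [hd.1, inv_smul_smul]
      rwa [this]
  have hEedisj : Pairwise (Function.onFun Disjoint Ee) := by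
    intro γ1 γ2 hne
    rw [Function.onFun, hEeimg, hEeimg]
    exact (Set.disjoint_image_iff hinj).2 (hDdisj hne)
  have hEeuniv : ⋃ γ, Ee γ = Set.univ := by
    have : ⋃ γ, Ee γ = φ '' (⋃ γ, D γ) := by
      rw [Set.image_iUnion]
      exact Set.iUnion_congr hEeimg
    rw [this, hDuniv, Set.image_univ, Set.range_eq_univ.2 hsurj]
  refine ⟨hφ, ?_⟩
  apply Measure.ext
  intro A hA
  rw [Measure.map_apply hφ hA]
  have key1 : φ ⁻¹' A = ⋃ γ, (D γ ∩ (fun x => γ • x) ⁻¹' A) := by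
    ext x
    simp only [Set.mem_preimage, Set.mem_iUnion, Set.mem_inter_iff]
    constructor
    · intro hx
      obtain ⟨γ, hγ⟩ := hDcov x
      exact ⟨γ, hγ, by rw [← hγ.1]; exact hx⟩
    · rintro ⟨γ, hγ, hγA⟩
      rw [hγ.1]; exact hγA
  have key2 : ∀ γ : Γ, D γ ∩ (fun x => γ • x) ⁻¹' A = (fun x => γ • x) ⁻¹' (Ee γ ∩ A) := by
    intro γ
    rw [Set.preimage_inter]
    congr 1
    ext x
    simp only [hEe, Set.mem_preimage, inv_smul_smul]
  rw [key1, measure_iUnion (fun γ1 γ2 hne => ((hDdisj hne).mono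
      Set.inter_subset_left Set.inter_subset_left))
    (fun γ => (hDm γ).inter ((hsmul γ) hA))]
  have : ∀ γ : Γ, μ (D γ ∩ (fun x => γ • x) ⁻¹' A) = μ (Ee γ ∩ A) := by
    intro γ
    rw [key2 γ]
    exact (hpmp γ).measure_preimage ((hEem γ).inter hA).nullMeasurableSet
  simp_rw [this]
  rw [← measure_iUnion (fun γ1 γ2 hne => ((hEedisj hne).mono
      Set.inter_subset_left Set.inter_subset_left))
    (fun γ => (hEem γ).inter hA)]
  rw [← Set.iUnion_inter, hEeuniv, Set.univ_inter]

end pmp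

end Stmt8Aux

/-- A pmp action of a countable group `Γ` on a standard probability space
is hyperfinite iff for every finite symmetric `S ⊆ Γ` the Schreier graphing `G_{α,S}` is
hyperfinite as a graphing. -/
theorem stmt8 {Γ X : Type*} [Group Γ] [Countable Γ] [MulAction Γ X]
    [MeasurableSpace X] [StandardBorelSpace X] (μ : Measure X) [IsProbabilityMeasure μ]
    (hpmp : ∀ γ : Γ, MeasurePreserving (fun x : X => γ • x) μ μ) :
    HyperfiniteAction Γ μ ↔
      ∀ S : Finset Γ, (∀ s ∈ S, s⁻¹ ∈ S) →
        HyperfiniteGraphing μ (schreierEdges Γ (S : Set Γ)) := by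
  classical
  obtain ⟨f, hfe⟩ := MeasureTheory.exists_measurableEmbedding_real X
  have hfm : Measurable f := hfe.measurable
  have hf : Function.Injective f := hfe.injective
  have hsmul : ∀ γ : Γ, Measurable (fun x : X => γ • x) := fun γ => (hpmp γ).measurable
  have hEmeas : ∀ S : Finset Γ, MeasurableSet (schreierEdges Γ (X := X) (S : Set Γ)) := by
    intro S
    have hrw : schreierEdges Γ (X := X) (S : Set Γ) =
        {p : X × X | f p.1 = f p.2}ᶜ ∩ ⋃ s ∈ (S : Set Γ), {p : X × X | f p.2 = f (s • p.1)} := by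
      ext p
      simp only [schreierEdges, Set.mem_inter_iff, Set.mem_compl_iff, Set.mem_iUnion,
        Set.mem_setOf_eq, Finset.mem_coe, exists_prop]
      constructor
      · rintro ⟨hne, s, hs, heq⟩
        exact ⟨fun h => hne (hf h), s, hs, congrArg f heq⟩
      · rintro ⟨hne, s, hs, heq⟩
        exact ⟨fun h => hne (congrArg f h), s, hs, hf heq⟩
    rw [hrw]
    refine ((measurableSet_eq_fun (hfm.comp measurable_fst) (hfm.comp measurable_snd)).compl).inter
      (MeasurableSet.biUnion S.countable_toSet fun s _ => ?_)
    exact measurableSet_eq_fun (hfm.comp measurable_snd)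
      (hfm.comp ((hsmul s).comp measurable_fst))
  constructor
  · -- hyperfinite action → hyperfinite graphings
    intro hHA S hSsym ε hε
    set k : ℕ := 2 * S.card + 1 with hk
    have hkpos : (0:ℝ) < k := by positivity
    have hδ : (0:ℝ) < ε / k := by positivity
    obtain ⟨G, _, _, a, hapmp, ha1, hamul, hmeasgt⟩ := hHA S (ε / k) hδ
    set A : Set X := {x | ∀ s ∈ S, ∃ g : G, a g x = s • x} with hA
    have hAm : MeasurableSet A := by
      have : A = ⋂ s ∈ (S : Set Γ), ⋃ g : G, {x : X | f (a g x) = f (s • x)} := by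
        ext x
        simp only [hA, Set.mem_setOf_eq, Set.mem_iInter, Set.mem_iUnion, Finset.mem_coe]
        constructor
        · intro h s hs
          obtain ⟨g, hg⟩ := h s hs
          exact ⟨g, congrArg f hg⟩
        · intro h s hs
          obtain ⟨g, hg⟩ := h s hs
          exact ⟨g, hf hg⟩
      rw [this]
      exact MeasurableSet.biInter S.countable_toSet fun s _ =>
        MeasurableSet.iUnion fun g =>
          measurableSet_eq_fun (hfm.comp (hapmp g).measurable) (hfm.comp (hsmul s))
    set E : Set (X × X) := schreierEdges Γ (S : Set Γ) with hE
    set Z : Set (X × X) := E ∩ ((Aᶜ ×ˢ (Set.univ : Set X)) ∪ ((Set.univ : Set X) ×ˢ Aᶜ)) with hZ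
    have hZE : Z ⊆ E := Set.inter_subset_left
    have hZm : MeasurableSet Z :=
      (hEmeas S).inter ((hAm.compl.prod MeasurableSet.univ).union
        (MeasurableSet.univ.prod hAm.compl))
    have hZsym : ∀ p ∈ Z, (Prod.snd p, Prod.fst p) ∈ Z := by
      rintro ⟨x, y⟩ ⟨⟨hne, s, hs, heq⟩, hcond⟩
      refine ⟨⟨Ne.symm hne, s⁻¹, hSsym s hs, ?_⟩, ?_⟩
      · simp only at heq ⊢
        rw [heq, inv_smul_smul]
      · rcases hcond with h | h
        · exact Or.inr ⟨Set.mem_univ _, (Set.mem_prod.1 h).1⟩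
        · exact Or.inl ⟨(Set.mem_prod.1 h).2, Set.mem_univ _⟩
    -- the complement of A is small
    have hμAc : μ Aᶜ < ENNReal.ofReal (ε / k) := by
      by_contra hcon
      push_neg at hcon
      have h1 : μ A = 1 - μ Aᶜ := by
        rw [measure_compl hAm (measure_ne_top μ A), measure_univ,
          ENNReal.sub_sub_cancel ENNReal.one_ne_top (prob_le_one)]
      have h2 : μ A ≤ 1 - ENNReal.ofReal (ε / k) := by
        rw [h1]; exact tsub_le_tsub_left hcon 1
      have h3 : (1:ℝ≥0∞) - ENNReal.ofReal (ε / k) ≤ ENNReal.ofReal (1 - ε / k) := by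
        rw [tsub_le_iff_right]
        rcases le_or_gt (ε / k) 1 with h | h
        · rw [← ENNReal.ofReal_add (by linarith) (le_of_lt hδ)]
          simp
        · refine le_trans ?_ le_add_self
          calc (1:ℝ≥0∞) = ENNReal.ofReal 1 := by simp
            _ ≤ ENNReal.ofReal (ε/k) := ENNReal.ofReal_le_ofReal h.le
      exact absurd (lt_of_le_of_lt (h2.trans h3) hmeasgt) (lt_irrefl _)
    -- bound the edge measure
    have hpre : ∀ s : Γ, MeasurableSet ((fun x : X => (x, s • x)) ⁻¹' Z) := fun s =>
      (measurable_id.prodMk (hsmul s)) hZm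
    have hcount : ∀ x : X, (∑' _ : {y : X // (x, y) ∈ Z}, (1:ℝ≥0∞)) ≤
        ∑ s ∈ S, Set.indicator ((fun x : X => (x, s • x)) ⁻¹' Z) (fun _ => (1:ℝ≥0∞)) x := by
      intro x
      set U : Finset Γ := S.filter (fun s => (x, s • x) ∈ Z) with hU
      have hchoose : ∀ y : {y : X // (x, y) ∈ Z}, ∃ s : Γ, s ∈ S ∧ (y : X) = s • x := by
        rintro ⟨y, hy⟩
        obtain ⟨s, hs, heq⟩ := hy.1.2
        exact ⟨s, hs, heq⟩
      choose ι hιS hιeq using hchoose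
      have hιU : ∀ y, ι y ∈ U := by
        rintro ⟨y, hy⟩
        refine Finset.mem_filter.2 ⟨hιS _, ?_⟩
        have h2 := hιeq ⟨y, hy⟩
        simp only at h2
        exact (congrArg (fun z => (x, z) ∈ Z) h2) ▸ hy
      have hinj : Function.Injective (fun y : {y : X // (x, y) ∈ Z} =>
          (⟨ι y, hιU y⟩ : {s : Γ // s ∈ U})) := by
        rintro ⟨y1, h1⟩ ⟨y2, h2⟩ h
        have hh : ι ⟨y1, h1⟩ = ι ⟨y2, h2⟩ := congrArg Subtype.val h
        have e1 := hιeq ⟨y1, h1⟩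
        have e2 := hιeq ⟨y2, h2⟩
        simp only at e1 e2
        apply Subtype.ext
        show y1 = y2
        rw [e1, e2, hh]
      have step1 : (∑' _ : {y : X // (x, y) ∈ Z}, (1:ℝ≥0∞)) ≤
          ∑' _ : {s : Γ // s ∈ U}, (1:ℝ≥0∞) :=
        ENNReal.summable.tsum_le_tsum_of_inj _ hinj (fun _ _ => zero_le) (fun _ => le_refl _)
          ENNReal.summable
      have step2 : (∑' _ : {s : Γ // s ∈ U}, (1:ℝ≥0∞)) = (U.card : ℝ≥0∞) := by
        rw [tsum_fintype]
        simp [Finset.card_univ]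
      have step3 : (U.card : ℝ≥0∞) =
          ∑ s ∈ S, Set.indicator ((fun x : X => (x, s • x)) ⁻¹' Z) (fun _ => (1:ℝ≥0∞)) x := by
        rw [hU, Finset.card_filter, Nat.cast_sum]
        apply Finset.sum_congr rfl
        intro s _
        by_cases hs : (x, s • x) ∈ Z
        · simp [Set.indicator_apply, hs]
        · simp [Set.indicator_apply, hs]
      calc (∑' _ : {y : X // (x, y) ∈ Z}, (1:ℝ≥0∞)) ≤ _ := step1
        _ = _ := step2
        _ = _ := step3
    have hedge : edgeMeasure μ Z < ENNReal.ofReal ε := by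
      have h1 : edgeMeasure μ Z ≤
          ∑ s ∈ S, μ ((fun x : X => (x, s • x)) ⁻¹' Z) := by
        calc edgeMeasure μ Z
            ≤ ∫⁻ x, ∑ s ∈ S, Set.indicator ((fun x : X => (x, s • x)) ⁻¹' Z)
                (fun _ => (1:ℝ≥0∞)) x ∂μ := lintegral_mono hcount
          _ = ∑ s ∈ S, ∫⁻ x, Set.indicator ((fun x : X => (x, s • x)) ⁻¹' Z)
                (fun _ => (1:ℝ≥0∞)) x ∂μ :=
              lintegral_finset_sum _ (fun s _ => measurable_const.indicator (hpre s))
          _ = ∑ s ∈ S, μ ((fun x : X => (x, s • x)) ⁻¹' Z) := by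
              apply Finset.sum_congr rfl
              intro s _
              rw [lintegral_indicator (hpre s)]
              simp
      have h2 : ∀ s ∈ S, μ ((fun x : X => (x, s • x)) ⁻¹' Z) ≤ 2 * μ Aᶜ := by
        intro s _
        have hsub : ((fun x : X => (x, s • x)) ⁻¹' Z) ⊆ Aᶜ ∪ (fun x : X => s • x) ⁻¹' Aᶜ := by
          intro x hx
          rcases hx.2 with h | h
          · exact Or.inl (Set.mem_prod.1 h).1
          · exact Or.inr (Set.mem_prod.1 h).2
        calc μ ((fun x : X => (x, s • x)) ⁻¹' Z) ≤ μ (Aᶜ ∪ (fun x : X => s • x) ⁻¹' Aᶜ) :=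
              measure_mono hsub
          _ ≤ μ Aᶜ + μ ((fun x : X => s • x) ⁻¹' Aᶜ) := measure_union_le _ _
          _ = μ Aᶜ + μ Aᶜ := by
              rw [(hpmp s).measure_preimage hAm.compl.nullMeasurableSet]
          _ = 2 * μ Aᶜ := by ring
      have h3 : edgeMeasure μ Z ≤ (2 * S.card : ℕ) * μ Aᶜ := by
        calc edgeMeasure μ Z ≤ ∑ s ∈ S, μ ((fun x : X => (x, s • x)) ⁻¹' Z) := h1
          _ ≤ ∑ _s ∈ S, 2 * μ Aᶜ := Finset.sum_le_sum h2
          _ = (S.card : ℝ≥0∞) * (2 * μ Aᶜ) := by rw [Finset.sum_const, nsmul_eq_mul]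
          _ = (2 * S.card : ℕ) * μ Aᶜ := by push_cast; ring
      rcases Nat.eq_zero_or_pos (2 * S.card) with hc | hc
      · rw [hc] at h3
        simp only [Nat.cast_zero, zero_mul, nonpos_iff_eq_zero] at h3
        rw [h3]
        simp [ENNReal.ofReal_pos, hε]
      · have h4 : ((2 * S.card : ℕ) : ℝ≥0∞) * μ Aᶜ <
            ((2 * S.card : ℕ) : ℝ≥0∞) * ENNReal.ofReal (ε / k) := by
          exact (ENNReal.mul_lt_mul_iff_right (by exact_mod_cast hc.ne') (ENNReal.natCast_ne_top _)).2 hμAc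
        have h5 : ((2 * S.card : ℕ) : ℝ≥0∞) * ENNReal.ofReal (ε / k) ≤ ENNReal.ofReal ε := by
          rw [← ENNReal.ofReal_natCast, ← ENNReal.ofReal_mul (by positivity)]
          apply ENNReal.ofReal_le_ofReal
          rw [hk]
          have hle : ((2 * S.card : ℕ) : ℝ) ≤ (k : ℝ) := by
            rw [hk]; push_cast; linarith
          calc ((2 * S.card : ℕ) : ℝ) * (ε / k) ≤ k * (ε / k) := by
                apply mul_le_mul_of_nonneg_right _ (le_of_lt hδ)
                rw [hk] at hle ⊢; exact hle
            _ = ε := by field_simp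
        exact lt_of_le_of_lt h3 (lt_of_lt_of_le h4 h5)
    refine ⟨Fintype.card G, Z, hZE, hZm, hZsym, hedge, ?_⟩
    -- components are contained in G-orbits
    intro x
    have hsub : {y | componentRel (E \ Z) x y} ⊆ Set.range (fun g : G => a g x) := by
      intro y hy
      induction hy with
      | refl => exact ⟨1, ha1 x⟩
      | tail h he ih =>
        rename_i b c
        obtain ⟨g, hg⟩ := ih
        have hg' : a g x = b := hg
        obtain ⟨heE, heZ⟩ := he
        have hbA : b ∈ A := by
          by_contra hbA
          exact heZ ⟨heE, Or.inl ⟨hbA, Set.mem_univ _⟩⟩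
        obtain ⟨hne, s, hs, heq⟩ := heE
        obtain ⟨h', hh'⟩ := hbA s hs
        refine ⟨h' * g, ?_⟩
        simp only at heq
        show a (h' * g) x = c
        rw [hamul, hg', hh', ← heq]
    have hfinrange : (Set.range (fun g : G => a g x)).Finite := Set.finite_range _
    constructor
    · exact hfinrange.subset hsub
    · calc Set.ncard {y | componentRel (E \ Z) x y}
          ≤ Set.ncard (Set.range (fun g : G => a g x)) :=
            Set.ncard_le_ncard hsub hfinrange
        _ = Set.ncard ((Set.univ : Set G).image (fun g : G => a g x)) := by
            rw [Set.image_univ]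
        _ ≤ Set.ncard (Set.univ : Set G) := Set.ncard_image_le Set.finite_univ
        _ = Fintype.card G := by rw [Set.ncard_univ, Nat.card_eq_fintype_card]
  · -- hyperfinite graphings → hyperfinite action
    intro hHG S ε hε
    set T : Finset Γ := S ∪ S.image (fun s => s⁻¹) with hT
    have hTsym : ∀ s ∈ T, s⁻¹ ∈ T := by
      intro s hs
      rcases Finset.mem_union.1 hs with h | h
      · exact Finset.mem_union_right _ (Finset.mem_image.2 ⟨s, h, rfl⟩)
      · obtain ⟨t, ht, rfl⟩ := Finset.mem_image.1 h
        rw [inv_inv]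
        exact Finset.mem_union_left _ ht
    have hST : S ⊆ T := Finset.subset_union_left
    have hδ : (0:ℝ) < min ε 1 := lt_min hε one_pos
    obtain ⟨M, Z, hZE, hZm, hZsym, hZμ, hcomps⟩ := hHG T hTsym (min ε 1) hδ
    set E : Set (X × X) := schreierEdges Γ (T : Set Γ) with hEdef
    set E' : Set (X × X) := E \ Z with hE'def
    have hE'm : MeasurableSet E' := (hEmeas T).diff hZm
    have hE'edges : ∀ p ∈ E', ∃ s ∈ T, p.2 = s • p.1 := fun p hp => hp.1.2
    have hE'sym : ∀ p ∈ E', (p.2, p.1) ∈ E' := by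
      rintro ⟨x, y⟩ ⟨⟨hne, s, hs, heq⟩, hZn⟩
      refine ⟨⟨Ne.symm hne, s⁻¹, hTsym s hs, ?_⟩, fun hc => hZn (hZsym _ hc)⟩
      simp only at heq ⊢
      rw [heq, inv_smul_smul]
    set M' : ℕ := max M 1 with hM'
    have hcompAll : ∀ x : X, {y | componentRel E' x y} = Stmt8Aux.CC T E' M' x := fun x =>
      Stmt8Aux.comp_eq_CC T E' hE'edges (hcomps x).1
        (le_trans (hcomps x).2 (le_max_left M 1))
    have hfin : ∀ x : X, {y | componentRel E' x y}.Finite := fun x => (hcomps x).1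
    have hMbound : ∀ x : X, Set.ncard {y | componentRel E' x y} ≤ M' := fun x =>
      le_trans (hcomps x).2 (le_max_left M 1)
    set Tm : X → X := Stmt8Aux.Tmap T E' M' f with hTm
    have hTmmeas : Measurable Tm :=
      Stmt8Aux.measurable_Tmap T E' M' f (hEmeas T |>.diff hZm) hsmul hfm hf hcompAll
    have hTminj : Function.Injective Tm :=
      Stmt8Aux.Tmap_injective T E' M' f hcompAll hE'sym hf
    have hTmsurj : Function.Surjective Tm :=
      Stmt8Aux.Tmap_surjective T E' M' f hcompAll hE'sym hf
    have hTmcov : ∀ x : X, ∃ γ : Γ, Tm x = γ • x := by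
      intro x
      have h1 : componentRel E' x (Tm x) := (Stmt8Aux.Tmap_succ T E' M' f hcompAll x).1
      have h2 : Tm x ∈ Stmt8Aux.CC T E' M' x := by rw [← hcompAll x]; exact h1
      obtain ⟨w, _, _, heq⟩ := h2
      exact ⟨w, heq⟩
    have hTmpmp : MeasurePreserving Tm μ μ :=
      Stmt8Aux.pmp_piecewise μ hpmp f hfm hf Tm hTmmeas hTminj hTmsurj hTmcov
    set N : ℕ := M'.factorial with hN
    have hNpos : 0 < N := Nat.factorial_pos M'
    haveI : NeZero N := ⟨hNpos.ne'⟩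
    have hTmN : ∀ x : X, Tm^[N] x = x := fun x =>
      Stmt8Aux.Tmap_factorial T E' M' f hcompAll hE'sym hf hfin hMbound x
    have hiter_mod : ∀ (j : ℕ) (x : X), Tm^[j % N] x = Tm^[j] x := by
      intro j x
      have h1 : Tm^[j] x = Tm^[j % N] (Tm^[N * (j / N)] x) := by
        rw [← Function.iterate_add_apply]
        congr 1
        exact (Nat.mod_add_div j N).symm
      have h2 : Tm^[N * (j / N)] x = x := by
        rw [Function.iterate_mul]
        exact Function.iterate_fixed (hTmN x) _
      rw [h1, h2]
    refine ⟨Multiplicative (ZMod N), inferInstance, inferInstance,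
      fun g x => Tm^[(Multiplicative.toAdd g).val] x, ?_, ?_, ?_, ?_⟩
    · exact fun g => hTmpmp.iterate _
    · intro x
      simp [ZMod.val_zero]
    · intro g h x
      show Tm^[(Multiplicative.toAdd (g * h)).val] x = _
      have : Multiplicative.toAdd (g * h) = Multiplicative.toAdd g + Multiplicative.toAdd h :=
        rfl
      rw [this, ZMod.val_add, hiter_mod, Function.iterate_add_apply]
    · -- measure of the good set
      set bad : Set X := ⋃ s ∈ (S : Set Γ), (fun x : X => (x, s • x)) ⁻¹' Z with hbad
      have hbadm : MeasurableSet bad :=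
        MeasurableSet.biUnion S.countable_toSet fun s _ =>
          (measurable_id.prodMk (hsmul s)) hZm
      have hgood : badᶜ ⊆ {x : X | ∀ s ∈ S, ∃ g : Multiplicative (ZMod N),
          Tm^[(Multiplicative.toAdd g).val] x = s • x} := by
        intro x hx s hs
        have hxs : (x, s • x) ∉ Z := by
          intro hc
          exact hx (Set.mem_biUnion hs hc)
        by_cases heq : s • x = x
        · refine ⟨1, ?_⟩
          have h0 : (Multiplicative.toAdd (1 : Multiplicative (ZMod N))).val = 0 := by
            simp [ZMod.val_zero]
          rw [h0]
          simpa using heq.symm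
        · have hmemE : (x, s • x) ∈ E := ⟨fun h => heq (h.symm), s, hST hs, rfl⟩
          have hmemE' : (x, s • x) ∈ E' := ⟨hmemE, hxs⟩
          have hrel : componentRel E' x (s • x) := Relation.ReflTransGen.single hmemE'
          obtain ⟨j, hj⟩ := Stmt8Aux.Tmap_reach T E' M' f hcompAll hE'sym hf hrel
          refine ⟨Multiplicative.ofAdd (j : ZMod N), ?_⟩
          have hval : (Multiplicative.toAdd (Multiplicative.ofAdd (j : ZMod N))).val = j % N := by
            simp [ZMod.val_natCast]
          rw [hval, hiter_mod, hj]
      have hμbad : μ bad < ENNReal.ofReal (min ε 1) := by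
        refine lt_of_le_of_lt ?_ hZμ
        have hpt : ∀ x : X, bad.indicator (fun _ => (1:ℝ≥0∞)) x ≤
            ∑' _ : {y : X // (x, y) ∈ Z}, (1:ℝ≥0∞) := by
          intro x
          by_cases hx : x ∈ bad
          · rw [Set.indicator_of_mem hx]
            obtain ⟨s, _, hsz⟩ := Set.mem_iUnion₂.1 hx
            exact ENNReal.le_tsum (⟨s • x, hsz⟩ : {y : X // (x, y) ∈ Z})
          · rw [Set.indicator_of_notMem hx]
            exact zero_le
        calc μ bad = ∫⁻ x, bad.indicator (fun _ => (1:ℝ≥0∞)) x ∂μ := by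
              rw [lintegral_indicator hbadm]; simp
          _ ≤ edgeMeasure μ Z := lintegral_mono hpt
      have hμgood : μ {x : X | ∀ s ∈ S, ∃ g : Multiplicative (ZMod N),
          Tm^[(Multiplicative.toAdd g).val] x = s • x} ≥ 1 - μ bad := by
        calc (1:ℝ≥0∞) - μ bad = μ badᶜ := by
              rw [measure_compl hbadm (measure_ne_top μ bad), measure_univ]
          _ ≤ _ := measure_mono hgood
      rcases le_or_gt 1 ε with h1 | h1
      · have : ENNReal.ofReal (1 - ε) = 0 := by
          rw [ENNReal.ofReal_eq_zero]; linarith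
        rw [this]
        refine lt_of_lt_of_le ?_ hμgood
        have hb1 : μ bad < 1 := by
          refine lt_of_lt_of_le hμbad ?_
          calc ENNReal.ofReal (min ε 1) ≤ ENNReal.ofReal 1 :=
              ENNReal.ofReal_le_ofReal (min_le_right _ _)
            _ = 1 := by simp
        exact tsub_pos_iff_lt.2 hb1
      · have hmin : min ε 1 = ε := min_eq_left h1.le
        rw [hmin] at hμbad
        refine lt_of_lt_of_le ?_ hμgood
        rw [lt_tsub_iff_right]
        calc ENNReal.ofReal (1 - ε) + μ bad < ENNReal.ofReal (1 - ε) + ENNReal.ofReal ε := by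
              exact ENNReal.add_lt_add_left (by simp) hμbad
          _ = ENNReal.ofReal 1 := by
              rw [← ENNReal.ofReal_add (by linarith) (le_of_lt hε)]
              ring_nf
          _ = 1 := by simp
end

section
/- Let Γ be a countable group, θ an IRS on Γ, and let α and β be pmp actions of Γ on standard probability spaces (X,μ) and (Y,ν), both with IRS θ. Let ζ = α ×_θ β be the relative independent joining over the conjugation action Γ ↷ (Sub(Γ), θ), formed using the factor maps Stab^α and Stab^β. Then ζ has IRS θ, and both α and β are factors of ζ. -/
open MeasureTheory
open scoped ENNReal

/-- Let `θ` be an IRS on a countable group `Γ` and `α`, `β` pmp actions of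
`Γ` on `(X,μ)` and `(Y,ν)` with IRS `θ`. Form the relative independent joining
`ζ = α ×_θ β` over the conjugation action on `(Sub(Γ), θ)`, using disintegrations of `μ`
and `ν` over `θ` via the stabilizer maps: `η = ∫ μ_s × ν_s dθ(s)`. Then `ζ` has IRS `θ`
and both `α` and `β` are factors of `ζ` (via the coordinate projections, which are
automatically `Γ`-equivariant for the diagonal action). -/
theorem stmt9 {Γ X Y : Type*} [Group Γ] [Countable Γ]
    [MeasurableSpace X] [StandardBorelSpace X] [MeasurableSpace Y] [StandardBorelSpace Y]
    [MulAction Γ X] [MulAction Γ Y]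
    (μ : Measure X) (ν : Measure Y) [IsProbabilityMeasure μ] [IsProbabilityMeasure ν]
    (θ : Measure (Subgroup Γ)) [IsProbabilityMeasure θ]
    -- θ is an invariant random subgroup
    (hconj : ∀ γ : Γ, Measure.map
        (fun H : Subgroup Γ => Subgroup.map (MulAut.conj γ).toMonoidHom H) θ = θ)
    -- α and β are pmp actions with IRS θ
    (hpmpX : ∀ γ : Γ, MeasurePreserving (fun x : X => γ • x) μ μ)
    (hpmpY : ∀ γ : Γ, MeasurePreserving (fun y : Y => γ • y) ν ν)
    (hmX : Measurable (fun x : X => MulAction.stabilizer Γ x))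
    (hmY : Measurable (fun y : Y => MulAction.stabilizer Γ y))
    (hmXY : Measurable (fun p : X × Y => MulAction.stabilizer Γ p))
    (hirsX : Measure.map (fun x : X => MulAction.stabilizer Γ x) μ = θ)
    (hirsY : Measure.map (fun y : Y => MulAction.stabilizer Γ y) ν = θ)
    -- disintegrations of μ and ν over θ via the stabilizer maps
    (μs : Subgroup Γ → Measure X) (νs : Subgroup Γ → Measure Y)
    (hprobX : ∀ᵐ s ∂θ, IsProbabilityMeasure (μs s))
    (hprobY : ∀ᵐ s ∂θ, IsProbabilityMeasure (νs s))
    (hdisX : ∀ A : Set X, MeasurableSet A → μ A = ∫⁻ s, μs s A ∂θ)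
    (hdisY : ∀ B : Set Y, MeasurableSet B → ν B = ∫⁻ s, νs s B ∂θ)
    (hconcX : ∀ᵐ s ∂θ, μs s {x : X | MulAction.stabilizer Γ x ≠ s} = 0)
    (hconcY : ∀ᵐ s ∂θ, νs s {y : Y | MulAction.stabilizer Γ y ≠ s} = 0)
    -- the relative independent joining η = ∫ μ_s × ν_s dθ(s)
    (η : Measure (X × Y))
    (hη : ∀ C : Set (X × Y), MeasurableSet C →
        η C = ∫⁻ s, ((μs s).prod (νs s)) C ∂θ) :
    Measure.map (fun p : X × Y => MulAction.stabilizer Γ p) η = θ ∧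
    Measure.map (Prod.fst : X × Y → X) η = μ ∧
    Measure.map (Prod.snd : X × Y → Y) η = ν ∧
    (∀ (γ : Γ) (p : X × Y), γ • p = (γ • p.1, γ • p.2)) := by

  have hstab : ∀ p : X × Y, MulAction.stabilizer Γ p
      = MulAction.stabilizer Γ p.1 ⊓ MulAction.stabilizer Γ p.2 := by
    intro p
    ext γ
    simp [MulAction.mem_stabilizer_iff, Subgroup.mem_inf, Prod.ext_iff]
  refine ⟨?_, ?_, ?_, fun γ p => rfl⟩
  · ext S hS
    rw [Measure.map_apply hmXY hS, hη _ (hmXY hS)]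
    have key : ∀ᵐ s ∂θ, ((μs s).prod (νs s))
        ((fun p : X × Y => MulAction.stabilizer Γ p) ⁻¹' S) = S.indicator 1 s := by
      filter_upwards [hprobX, hprobY, hconcX, hconcY] with s h1 h2 h3 h4
      haveI := h1; haveI := h2
      have hnull : ((μs s).prod (νs s)) {p : X × Y | MulAction.stabilizer Γ p ≠ s} = 0 := by
        refine measure_mono_null (t := ({x : X | MulAction.stabilizer Γ x ≠ s} ×ˢ Set.univ)
          ∪ (Set.univ ×ˢ {y : Y | MulAction.stabilizer Γ y ≠ s})) ?_ ?_
        · intro p hp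
          by_contra hcon
          simp only [Set.mem_union, Set.mem_prod, Set.mem_setOf_eq, Set.mem_univ, and_true,
            true_and, not_or, not_not] at hcon
          exact hp (by rw [hstab p, hcon.1, hcon.2, inf_idem])
        · refine measure_union_null ?_ ?_ <;> rw [Measure.prod_prod] <;>
            simp [h3, h4]
      by_cases hsS : s ∈ S
      · have hle : (1 : ℝ≥0∞) ≤ ((μs s).prod (νs s))
            ((fun p : X × Y => MulAction.stabilizer Γ p) ⁻¹' S) := by
          have hsub : (Set.univ : Set (X × Y)) ⊆
              ((fun p : X × Y => MulAction.stabilizer Γ p) ⁻¹' S)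
              ∪ {p : X × Y | MulAction.stabilizer Γ p ≠ s} := by
            intro p _
            by_cases h : MulAction.stabilizer Γ p = s
            · exact Or.inl (by simp [h, hsS])
            · exact Or.inr h
          calc (1 : ℝ≥0∞) = ((μs s).prod (νs s)) Set.univ := by simp
            _ ≤ ((μs s).prod (νs s)) (((fun p : X × Y => MulAction.stabilizer Γ p) ⁻¹' S)
                ∪ {p : X × Y | MulAction.stabilizer Γ p ≠ s}) := measure_mono hsub
            _ ≤ _ + _ := measure_union_le _ _
            _ = _ := by rw [hnull, add_zero]
        have hge := prob_le_one (μ := (μs s).prod (νs s))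
          (s := (fun p : X × Y => MulAction.stabilizer Γ p) ⁻¹' S)
        rw [Set.indicator_of_mem hsS]
        exact le_antisymm hge hle
      · rw [Set.indicator_of_notMem hsS]
        refine measure_mono_null ?_ hnull
        intro p hp hps
        exact hsS (hps ▸ hp)
    rw [lintegral_congr_ae key, lintegral_indicator_one hS]
  · ext A hA
    rw [Measure.map_apply measurable_fst hA, hη _ (measurable_fst hA), hdisX A hA]
    refine lintegral_congr_ae ?_
    filter_upwards [hprobY] with s h2
    haveI := h2
    have : (Prod.fst ⁻¹' A : Set (X × Y)) = A ×ˢ Set.univ := by ext p; simp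
    rw [this, Measure.prod_prod]
    simp
  · ext B hB
    rw [Measure.map_apply measurable_snd hB, hη _ (measurable_snd hB), hdisY B hB]
    refine lintegral_congr_ae ?_
    filter_upwards [hprobX, hprobY] with s h1 h2
    haveI := h1; haveI := h2
    have : (Prod.snd ⁻¹' B : Set (X × Y)) = Set.univ ×ˢ B := by ext p; simp
    rw [this, Measure.prod_prod]
    simp
end

section
/- Every measure algebra is Dedekind complete as a Boolean algebra: every subset admits a supremum and an infimum. -/
open scoped symmDiff

open Filter Topology

private theorem stmt12_aux {A : Type*} [BooleanAlgebra A] [MetricSpace A] [CompleteSpace A]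
    (μ : A → ℝ) (hμ0 : ∀ a : A, 0 ≤ μ a)
    (hadd : ∀ a b : A, a ⊓ b = ⊥ → μ (a ⊔ b) = μ a + μ b)
    (hdist : ∀ a b : A, dist a b = μ (a ∆ b)) :
    ∀ s : Set A, ∃ x : A, IsLUB s x := by
  classical
  -- basic facts about μ
  have hsd : ∀ a b : A, a ≤ b → μ b = μ a + μ (b \ a) := by
    intro a b hab
    rw [← hadd a (b \ a) (disjoint_iff.mp disjoint_sdiff_self_right),
      sup_sdiff_cancel' le_rfl hab]
  have hmono : ∀ a b : A, a ≤ b → μ a ≤ μ b := by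
    intro a b hab
    have := hsd a b hab
    linarith [hμ0 (b \ a)]
  have hsubadd : ∀ a b : A, μ (a ⊔ b) ≤ μ a + μ b := by
    intro a b
    have h1 : μ (a ⊔ b) = μ a + μ (b \ a) := by
      rw [← sup_sdiff_self_right, hadd a (b \ a) (disjoint_iff.mp disjoint_sdiff_self_right)]
    have := hmono (b \ a) b sdiff_le
    linarith
  have hbot : ∀ a : A, μ a = 0 → a = ⊥ := by
    intro a ha
    have : dist a ⊥ = 0 := by rw [hdist]; simpa using ha
    exact dist_eq_zero.mp this
  intro s
  -- the set of finite joins of elements of s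
  set T : Set A := {t | ∃ f : Finset A, ↑f ⊆ s ∧ t = f.sup id} with hT
  have hbotT : (⊥ : A) ∈ T := ⟨∅, by simp, by simp⟩
  have hsupT : ∀ a ∈ s, ∀ t ∈ T, a ⊔ t ∈ T := by
    rintro a ha t ⟨f, hf, rfl⟩
    exact ⟨insert a f, by simpa using Set.insert_subset ha hf, by simp⟩
  have hjoinT : ∀ t ∈ T, ∀ t' ∈ T, t ⊔ t' ∈ T := by
    rintro t ⟨f, hf, rfl⟩ t' ⟨g, hg, rfl⟩
    refine ⟨f ∪ g, ?_, by rw [Finset.sup_union]⟩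
    push_cast
    exact Set.union_subset hf hg
  have hTne : (μ '' T).Nonempty := ⟨μ ⊥, ⊥, hbotT, rfl⟩
  have hTbdd : BddAbove (μ '' T) := by
    refine ⟨μ ⊤, ?_⟩
    rintro _ ⟨t, _, rfl⟩
    exact hmono _ _ le_top
  set M : ℝ := sSup (μ '' T) with hM
  have hle : ∀ t ∈ T, μ t ≤ M := fun t ht => le_csSup hTbdd ⟨t, ht, rfl⟩
  have hex : ∀ n : ℕ, ∃ t ∈ T, M - 1 / (n + 1) < μ t := by
    intro n
    have h1 : M - 1 / (n + 1) < M := by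
      have : (0:ℝ) < 1 / (n + 1) := by positivity
      linarith
    obtain ⟨_, ⟨t, ht, rfl⟩, hlt⟩ := exists_lt_of_lt_csSup hTne h1
    exact ⟨t, ht, hlt⟩
  choose t htT hμt using hex
  -- the increasing sequence of joins
  set u : ℕ → A := fun n => Nat.rec (t 0) (fun n un => un ⊔ t (n + 1)) n with hu
  have hu0 : u 0 = t 0 := rfl
  have husucc : ∀ n, u (n + 1) = u n ⊔ t (n + 1) := fun n => rfl
  have huT : ∀ n, u n ∈ T := by
    intro n
    induction n with
    | zero => exact htT 0
    | succ n ih => rw [husucc]; exact hjoinT _ ih _ (htT (n + 1))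
  have humono : Monotone u := by
    apply monotone_nat_of_le_succ
    intro n
    rw [husucc]
    exact le_sup_left
  have htu : ∀ n, t n ≤ u n := by
    intro n
    cases n with
    | zero => exact le_rfl
    | succ n => rw [husucc]; exact le_sup_right
  have huM : ∀ n, μ (u n) ≤ M := fun n => hle _ (huT n)
  have huμ : ∀ n, M - 1 / (n + 1) < μ (u n) :=
    fun n => lt_of_lt_of_le (hμt n) (hmono _ _ (htu n))
  -- Cauchy
  have hdistle : ∀ m n : ℕ, m ≤ n → dist (u m) (u n) ≤ 1 / (m + 1) := by
    intro m n hmn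
    have h1 : μ (u n) = μ (u m) + μ (u n \ u m) := hsd _ _ (humono hmn)
    rw [hdist, symmDiff_of_le (humono hmn)]
    have := huμ m
    have := huM n
    linarith
  have hcauchy : CauchySeq u :=
    cauchySeq_of_le_tendsto_0' (fun n : ℕ => 1 / ((n : ℝ) + 1)) hdistle
      tendsto_one_div_add_atTop_nhds_zero_nat
  obtain ⟨x, hx⟩ := cauchySeq_tendsto_of_complete hcauchy
  have hdx : Tendsto (fun n => dist (u n) x) atTop (𝓝 0) := by
    simpa using hx.dist (tendsto_const_nhds : Tendsto (fun _ : ℕ => x) atTop (𝓝 x))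
  refine ⟨x, ?_, ?_⟩
  · -- upper bound
    intro a ha
    have key : ∀ n : ℕ, μ (a \ x) ≤ 1 / (n + 1) + dist (u n) x := by
      intro n
      have h1 : a \ x ≤ (a \ u n) ⊔ (u n \ x) := sdiff_triangle a (u n) x
      have h2 : μ (a \ x) ≤ μ (a \ u n) + μ (u n \ x) :=
        (hmono _ _ h1).trans (hsubadd _ _)
      have h3 : μ (a \ u n) ≤ 1 / (n + 1) := by
        have hmem : a ⊔ u n ∈ T := hsupT a ha _ (huT n)
        have h4 : μ (a ⊔ u n) = μ (u n) + μ (a \ u n) := by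
          rw [hsd (u n) (a ⊔ u n) le_sup_right, sup_sdiff_right_self]
        have := hle _ hmem
        have := huμ n
        linarith
      have h5 : μ (u n \ x) ≤ dist (u n) x := by
        rw [hdist]
        apply hmono
        rw [symmDiff_def]
        exact le_sup_left
      linarith
    have htend : Tendsto (fun n : ℕ => 1 / ((n : ℝ) + 1) + dist (u n) x) atTop (𝓝 0) := by
      simpa using tendsto_one_div_add_atTop_nhds_zero_nat.add hdx
    have h0 : μ (a \ x) ≤ 0 := ge_of_tendsto' htend key
    have : a \ x = ⊥ := hbot _ (le_antisymm h0 (hμ0 _))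
    exact sdiff_eq_bot_iff.mp this
  · -- least
    intro b hb
    have hub : ∀ n, u n ≤ b := by
      intro n
      have : ∀ c ∈ T, c ≤ b := by
        rintro _ ⟨f, hf, rfl⟩
        exact Finset.sup_le fun i hi => hb (hf hi)
      exact this _ (huT n)
    have key : ∀ n : ℕ, μ (x \ b) ≤ dist (u n) x := by
      intro n
      have h1 : x \ b ≤ (x \ u n) ⊔ (u n \ b) := sdiff_triangle x (u n) b
      rw [sdiff_eq_bot_iff.mpr (hub n), sup_bot_eq] at h1
      calc μ (x \ b) ≤ μ (x \ u n) := hmono _ _ h1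
        _ ≤ μ (u n ∆ x) := by apply hmono; rw [symmDiff_def]; exact le_sup_right
        _ = dist (u n) x := (hdist _ _).symm
    have h0 : μ (x \ b) ≤ 0 := ge_of_tendsto' hdx key
    have : x \ b = ⊥ := hbot _ (le_antisymm h0 (hμ0 _))
    exact sdiff_eq_bot_iff.mp this

/-- Every measure algebra is Dedekind complete as a Boolean algebra:
every subset admits a supremum and an infimum. -/
theorem stmt12 {A : Type*} [BooleanAlgebra A] [MetricSpace A] [CompleteSpace A]
    (μ : A → ℝ) (hμ1 : μ ⊤ = 1) (hμ0 : ∀ a : A, 0 ≤ μ a)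
    (hadd : ∀ a b : A, a ⊓ b = ⊥ → μ (a ⊔ b) = μ a + μ b)
    (hdist : ∀ a b : A, dist a b = μ (a ∆ b)) :
    ∀ s : Set A, (∃ x : A, IsLUB s x) ∧ (∃ x : A, IsGLB s x) := by
  intro s
  constructor
  · exact stmt12_aux μ hμ0 hadd hdist s
  · obtain ⟨x, hx⟩ := stmt12_aux μ hμ0 hadd hdist (compl '' s)
    refine ⟨xᶜ, ?_, ?_⟩
    · intro a ha
      have : aᶜ ≤ x := hx.1 ⟨a, ha, rfl⟩
      simpa using compl_le_compl this
    · intro c hc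
      have : x ≤ cᶜ := by
        apply hx.2
        rintro _ ⟨a, ha, rfl⟩
        exact compl_le_compl (hc ha)
      simpa using compl_le_compl this
end

section
/- Let α and β be pmp actions of a countable group Γ on standard probability spaces (X,μ) and (Y,ν) with α a factor of β via π : Y → X, and suppose θ_α = θ_β. Then for every finite S ⊆ Γ, π restricted to almost every Γ-orbit is an isomorphism of S-labelled Schreier graphs; in particular π is a colored graphing factor map from G_{β,S} to G_{α,S}. -/
open MeasureTheory

/-- Let `α`, `β` be pmp actions of a countable group `Γ` on standard
probability spaces `(X,μ)`, `(Y,ν)` with `α` a factor of `β` via `π : Y → X`, and suppose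
`θ_α = θ_β`. Then for every finite `S ⊆ Γ` and almost every `y`, the restriction of `π` to
the orbit of `y` is an isomorphism of `S`-labelled Schreier graphs: it is equivariant,
injective on the orbit, and preserves and reflects the `S`-labels of edges. In particular
`π` is a colored graphing factor map from `G_{β,S}` to `G_{α,S}`. -/
theorem stmt18 {Γ X Y : Type*} [Group Γ] [Countable Γ]
    [MeasurableSpace X] [StandardBorelSpace X] [MeasurableSpace Y] [StandardBorelSpace Y]
    [MulAction Γ X] [MulAction Γ Y]
    (μ : Measure X) (ν : Measure Y) [IsProbabilityMeasure μ] [IsProbabilityMeasure ν]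
    (hα : ∀ γ : Γ, MeasurePreserving (fun x : X => γ • x) μ μ)
    (hβ : ∀ γ : Γ, MeasurePreserving (fun y : Y => γ • y) ν ν)
    (hmX : Measurable (fun x : X => MulAction.stabilizer Γ x))
    (hmY : Measurable (fun y : Y => MulAction.stabilizer Γ y))
    (π : Y → X) (hπ : MeasurePreserving π ν μ)
    (hequiv : ∀ᵐ y ∂ν, ∀ γ : Γ, π (γ • y) = γ • π y)
    (hirs : Measure.map (fun x : X => MulAction.stabilizer Γ x) μ
          = Measure.map (fun y : Y => MulAction.stabilizer Γ y) ν)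
    (S : Finset Γ) :
    ∀ᵐ y ∂ν,
      (∀ γ : Γ, π (γ • y) = γ • π y) ∧
      (∀ γ γ' : Γ, π (γ • y) = π (γ' • y) → γ • y = γ' • y) ∧
      (∀ γ γ' : Γ, ∀ s ∈ S, (s • (γ • y) = γ' • y ↔ s • π (γ • y) = π (γ' • y))) := by

  classical
  -- measurability of `{H | g ∈ H}` in the subgroup space
  have hmem : ∀ g : Γ, MeasurableSet {H : Subgroup Γ | g ∈ H} := by
    intro g
    exact ⟨(fun f : Γ → Prop => f g) ⁻¹' {p : Prop | p},
      (measurable_pi_apply g) (by trivial), rfl⟩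
  -- for each g, a.e. y : g • π y = π y → g • y = y
  have hBg : ∀ g : Γ, ∀ᵐ y ∂ν, g • π y = π y → g • y = y := by
    intro g
    set T : Set Y := {y | g ∈ MulAction.stabilizer Γ y} with hTdef
    set T' : Set Y := π ⁻¹' {x | g ∈ MulAction.stabilizer Γ x} with hT'def
    have hT : MeasurableSet T := hmY (hmem g)
    have hXset : MeasurableSet {x : X | g ∈ MulAction.stabilizer Γ x} := hmX (hmem g)
    have hT' : MeasurableSet T' := hπ.measurable hXset
    have e1 : ν T' = ν T := by
      have h1 : ν T' = μ {x : X | g ∈ MulAction.stabilizer Γ x} :=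
        hπ.measure_preimage hXset.nullMeasurableSet
      have h2 : μ {x : X | g ∈ MulAction.stabilizer Γ x} = ν T := by
        have hmap := congrArg (fun m : Measure (Subgroup Γ) =>
          m {H : Subgroup Γ | g ∈ H}) hirs
        simpa [Measure.map_apply hmX (hmem g), Measure.map_apply hmY (hmem g), hTdef]
          using hmap
      rw [h1, h2]
    have hTdiff : ν (T \ T') = 0 := by
      refine measure_mono_null ?_ (ae_iff.mp hequiv)
      rintro y ⟨hyT, hyT'⟩
      intro hall
      apply hyT'
      have h1 : g • y = y := hyT
      have h2 : π (g • y) = π y := by rw [h1]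
      have h3 : g • π y = π y := by rw [← hall g, h2]
      exact h3
    have hT'T : ν (T' \ T) = 0 := by
      have e2 : ν (T' ∩ T) + ν (T' \ T) = ν T' := measure_inter_add_diff T' hT
      have e3 : ν T ≤ ν (T' ∩ T) := by
        calc ν T ≤ ν ((T' ∩ T) ∪ (T \ T')) := by
              refine measure_mono fun y hy => ?_
              by_cases h : y ∈ T'
              · exact Or.inl ⟨h, hy⟩
              · exact Or.inr ⟨hy, h⟩
          _ ≤ ν (T' ∩ T) + ν (T \ T') := measure_union_le _ _
          _ = ν (T' ∩ T) := by rw [hTdiff, add_zero]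
      have hfin : ν (T' ∩ T) ≠ ⊤ := measure_ne_top ν _
      have e4 : ν (T' ∩ T) + ν (T' \ T) ≤ ν (T' ∩ T) + 0 := by
        rw [add_zero, e2, e1]; exact e3
      have := (ENNReal.add_le_add_iff_left hfin).mp e4
      exact le_antisymm this zero_le
    rw [ae_iff]
    refine measure_mono_null ?_ hT'T
    intro y hy
    simp only [Set.mem_setOf_eq] at hy
    push_neg at hy
    exact ⟨hy.1, fun h => hy.2 h⟩
  have hB : ∀ᵐ y ∂ν, ∀ g : Γ, g • π y = π y → g • y = y := ae_all_iff.mpr hBg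
  have hC : ∀ᵐ y ∂ν, (∀ γ : Γ, π (γ • y) = γ • π y) ∧
      (∀ g : Γ, g • π y = π y → g • y = y) := hequiv.and hB
  have hD : ∀ᵐ y ∂ν, ∀ γ : Γ,
      (∀ δ : Γ, π (δ • (γ • y)) = δ • π (γ • y)) ∧
      (∀ g : Γ, g • π (γ • y) = π (γ • y) → g • (γ • y) = γ • y) :=
    ae_all_iff.mpr fun γ => (hβ γ).quasiMeasurePreserving.tendsto_ae.eventually hC
  filter_upwards [hD] with y hy
  have heq : ∀ δ : Γ, π (δ • y) = δ • π y := by simpa using (hy 1).1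
  have hstab : ∀ g : Γ, g • π y = π y → g • y = y := by simpa using (hy 1).2
  have hinj : ∀ γ γ' : Γ, π (γ • y) = π (γ' • y) → γ • y = γ' • y := by
    intro γ γ' h
    have h1 : γ • π y = γ' • π y := by rw [← heq γ, ← heq γ', h]
    have h2 : (γ'⁻¹ * γ) • π y = π y := by rw [mul_smul, h1, inv_smul_smul]
    have h3 := hstab _ h2
    have h4 : γ' • ((γ'⁻¹ * γ) • y) = γ' • y := congrArg (fun z => γ' • z) h3
    rwa [smul_smul, mul_inv_cancel_left] at h4
  refine ⟨heq, hinj, fun γ γ' s _ => ⟨fun h => ?_, fun h => ?_⟩⟩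
  · have h' : (s * γ) • y = γ' • y := by rw [mul_smul]; exact h
    have := congrArg π h'
    rw [heq (s * γ), heq γ', mul_smul] at this
    rw [heq γ, heq γ']
    exact this
  · have h' : π ((s * γ) • y) = π (γ' • y) := by
      rw [heq (s * γ), mul_smul, ← heq γ]
      exact h
    have := hinj _ _ h'
    rwa [mul_smul] at this
end
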